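/- arXiv:2102.00526 — 4 statements merged into one kernel-verified Lean document; each statement's English description precedes it below -/
import Mathlib

section
/- There is no first-order sentence φ in the first-order language with a single binary relation symbol E (and equality) such that for every finite simple graph G (viewed as a structure for this language via its adjacency relation), G satisfies φ if and only if G is bipartite. Equivalently, the class of finite bipartite graphs is not finitely axiomatizable modulo finiteness. -/
open FirstOrder

/-- A simple graph is *bipartite* if its vertex set is the union of two disjoint nonempty
subsets such that every edge joins a vertex of one subset to a vertex of the other. -/
def SimpleGraph.IsBipartite' {V : Type*} (G : SimpleGraph V) : Prop :=
  ∃ A B : Set V, A.Nonempty ∧ B.Nonempty ∧ Disjoint A B ∧ A ∪ B = Set.univ ∧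
    ∀ x y : V, G.Adj x y → ((x ∈ A ∧ y ∈ B) ∨ (x ∈ B ∧ y ∈ A))

namespace BipAux

/-! ### The cycle graph on `ZMod m` -/

/-- The cycle graph on `ZMod m`. -/
def CycleG (m : ℕ) : SimpleGraph (ZMod m) :=
  SimpleGraph.fromRel (fun x y => x - y = 1)

lemma cycleG_adj {m : ℕ} (x y : ZMod m) :
    (CycleG m).Adj x y ↔ x ≠ y ∧ (x - y = 1 ∨ y - x = 1) := by
  simp [CycleG, SimpleGraph.fromRel_adj]

instance cycleStructure (m : ℕ) : Language.graph.Structure (ZMod m) :=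
  (CycleG m).structure

@[simp] lemma relMap_adj {m : ℕ} (v : Fin 2 → ZMod m) :
    Language.Structure.RelMap (L := Language.graph) (M := ZMod m)
      (Language.graphRel.adj : Language.graph.Relations 2) v
      = (CycleG m).Adj (v 0) (v 1) := rfl

/-! ### Circular distance types -/

/-- The "type" of a circular difference `d : ZMod m` at scale `t`: the integer it represents
if its circular magnitude is at most `t`, and `none` otherwise. -/
def tau (m t : ℕ) (d : ZMod m) : Option ℤ :=
  if d.val ≤ t then some d.val
  else if m - d.val ≤ t then some ((d.val : ℤ) - m) else none

lemma tau_zero (m t : ℕ) [NeZero m] : tau m t 0 = some 0 := by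
  unfold tau
  simp [ZMod.val_zero]

lemma tau_cast {m t s : ℕ} [NeZero m] (w : ℤ) (hw : w.natAbs ≤ s) (hts : t ≤ s)
    (hm : 2 * s < m) :
    tau m t ((w : ZMod m)) = if w.natAbs ≤ t then some w else none := by
  have hV : (((w : ZMod m)).val : ℤ) = w % m := ZMod.val_intCast w
  have hVlt : ((w : ZMod m)).val < m := ZMod.val_lt _
  have hmod : (w % m = w ∧ 0 ≤ w) ∨ (w % m = w + m ∧ w < 0) := by
    rcases le_or_gt 0 w with h | h
    · left
      refine ⟨Int.emod_eq_of_lt h ?_, h⟩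
      omega
    · right
      refine ⟨?_, h⟩
      have h1 : (w + m) % m = w + m := Int.emod_eq_of_lt (by omega) (by omega)
      have h2 : (w + m) % m = w % m := by
        simpa using Int.add_mul_emod_self_left (a := w) (b := 1) (c := m)
      omega
  unfold tau
  split_ifs with h1 h2 h3 h4 h5 <;>
    first
      | (simp only [Option.some.injEq]; omega)
      | rfl
      | (exfalso; omega)

lemma tau_some {m t : ℕ} [NeZero m] {d : ZMod m} {z : ℤ} (h : tau m t d = some z) :
    d = (z : ZMod m) ∧ z.natAbs ≤ t := by
  have hd : ((d.val : ℤ) : ZMod m) = d := by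
    push_cast
    simp [ZMod.natCast_val, ZMod.cast_id]
  have hVlt : d.val < m := ZMod.val_lt _
  unfold tau at h
  split_ifs at h with h1 h2
  · obtain rfl : (d.val : ℤ) = z := by simpa using h
    exact ⟨hd.symm, by omega⟩
  · obtain rfl : (d.val : ℤ) - m = z := by simpa using h
    constructor
    · push_cast
      simp [ZMod.natCast_val, ZMod.cast_id, ZMod.natCast_self]
    · omega

lemma tau_eq_none {m t : ℕ} [NeZero m] {d : ZMod m} :
    tau m t d = none ↔ (t < d.val ∧ t < m - d.val) := by
  unfold tau
  split_ifs <;> simp <;> omega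

lemma tau_mono {m n t : ℕ} [NeZero m] [NeZero n] (hm : 4 * t < m) (hn : 4 * t < n)
    {d : ZMod m} {e : ZMod n} (h : tau m (2 * t) d = tau n (2 * t) e) :
    tau m t d = tau n t e := by
  cases o : tau m (2 * t) d with
  | none =>
    have o' : tau n (2 * t) e = none := by rw [← h, o]
    rw [tau_eq_none] at o o'
    rw [tau_eq_none.2 (by omega), tau_eq_none.2 (by omega)]
  | some z =>
    have o' : tau n (2 * t) e = some z := by rw [← h, o]
    obtain ⟨hd, hz⟩ := tau_some o
    obtain ⟨he, -⟩ := tau_some o'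
    rw [hd, he, tau_cast z hz (by omega) (by omega), tau_cast z hz (by omega) (by omega)]

lemma tau_neg {m t : ℕ} [NeZero m] (hm : 2 * t < m) (d : ZMod m) :
    tau m t (-d) = (tau m t d).map (fun z => -z) := by
  rcases eq_or_ne d 0 with rfl | hd
  · norm_num [tau, ZMod.val_zero]
  · have h1 : (-d).val = m - d.val := by rw [ZMod.neg_val, if_neg hd]
    have h2 : d.val ≠ 0 := by simpa [ZMod.val_eq_zero] using hd
    have hVlt : d.val < m := ZMod.val_lt _
    unfold tau
    rw [h1]
    rcases le_or_gt d.val t with hA | hA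
    · rw [if_neg (by omega), if_pos (by omega), if_pos hA, Option.map_some]
      simp only [Option.some.injEq]
      omega
    · rcases le_or_gt (m - d.val) t with hB | hB
      · rw [if_pos (by omega), if_neg (by omega), if_pos hB, Option.map_some]
        simp only [Option.some.injEq]
        omega
      · rw [if_neg (by omega), if_neg (by omega), if_neg (by omega), if_neg (by omega),
          Option.map_none]

lemma adj_iff_tau {m t : ℕ} [NeZero m] (h1 : 1 ≤ t) (hm : 2 * t < m) (x y : ZMod m) :
    (CycleG m).Adj x y ↔ (tau m t (x - y) = some 1 ∨ tau m t (x - y) = some (-1)) := by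
  haveI : Fact (1 < m) := ⟨by omega⟩
  have c1 : ((1 : ℤ) : ZMod m) = 1 := by push_cast; ring
  have t1 : tau m t (1 : ZMod m) = some 1 := by
    rw [← c1, tau_cast (t := t) (s := t) 1 (by omega) le_rfl hm, if_pos (by omega)]
  have tneg1 : tau m t (-1 : ZMod m) = some (-1) := by
    have : ((-1 : ℤ) : ZMod m) = -1 := by push_cast; ring
    rw [← this, tau_cast (t := t) (s := t) (-1) (by omega) le_rfl hm, if_pos (by omega)]
  rw [cycleG_adj]
  constructor
  · rintro ⟨hne, hxy | hyx⟩
    · left; rw [hxy]; exact t1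
    · right
      have : x - y = -1 := by rw [← hyx]; ring
      rw [this]; exact tneg1
  · rintro (h | h)
    · obtain ⟨hc, -⟩ := tau_some h
      rw [c1] at hc
      refine ⟨?_, Or.inl hc⟩
      rintro rfl
      rw [sub_self] at hc
      exact one_ne_zero hc.symm
    · obtain ⟨hc, -⟩ := tau_some h
      have hc' : x - y = -1 := by rw [hc]; push_cast; ring
      refine ⟨?_, Or.inr (by rw [← neg_sub, hc']; ring)⟩
      rintro rfl
      rw [sub_self] at hc'
      have : (1 : ZMod m) = 0 := by
        have := hc'.symm
        rw [neg_eq_zero.symm] at this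
        simpa using congrArg Neg.neg this
      exact one_ne_zero this

/-! ### The back-and-forth system -/

/-- Two tuples in two cycles are matched at scale `t` if corresponding pairwise circular
differences have the same type at scale `t`. -/
def Matched (m n t : ℕ) {l : ℕ} (a : Fin l → ZMod m) (b : Fin l → ZMod n) : Prop :=
  ∀ i j, tau m t (a i - a j) = tau n t (b i - b j)

lemma Matched.symm {m n t l : ℕ} {a : Fin l → ZMod m} {b : Fin l → ZMod n}
    (h : Matched m n t a b) : Matched n m t b a := fun i j => (h i j).symm

lemma extend {m n t l : ℕ} [NeZero m] [NeZero n] (ht : 1 ≤ t)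
    (hm : 6 * t < m) (hn : 6 * t < n) (hln : l * (2 * t + 1) < n)
    {a : Fin l → ZMod m} {b : Fin l → ZMod n} (h : Matched m n (2 * t) a b)
    (x : ZMod m) :
    ∃ y : ZMod n, Matched m n t (Fin.snoc a x) (Fin.snoc b y) := by
  have main : ∃ y : ZMod n, ∀ j, tau m t (x - a j) = tau n t (y - b j) := by
    by_cases hc : ∃ i z, tau m t (x - a i) = some z
    · obtain ⟨i, z, hz⟩ := hc
      obtain ⟨hxz, hzt⟩ := tau_some hz
      refine ⟨b i + (z : ZMod n), fun j => ?_⟩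
      cases o : tau m (2 * t) (a i - a j) with
      | some e =>
        have o' : tau n (2 * t) (b i - b j) = some e := by rw [← h i j, o]
        obtain ⟨he, het⟩ := tau_some o
        obtain ⟨he', -⟩ := tau_some o'
        have hxa : x - a j = ((z + e : ℤ) : ZMod m) := by
          have : x - a j = (x - a i) + (a i - a j) := by ring
          rw [this, hxz, he]; push_cast; ring
        have hyb : (b i + (z : ZMod n)) - b j = ((z + e : ℤ) : ZMod n) := by
          have : (b i + (z : ZMod n)) - b j = (z : ZMod n) + (b i - b j) := by ring
          rw [this, he']; push_cast; ring
        rw [hxa, hyb, tau_cast (s := 3 * t) _ (by omega) (by omega) (by omega),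
          tau_cast (s := 3 * t) _ (by omega) (by omega) (by omega)]
      | none =>
        have o' : tau n (2 * t) (b i - b j) = none := by rw [← h i j, o]
        have l1 : tau m t (x - a j) = none := by
          cases o2 : tau m t (x - a j) with
          | none => rfl
          | some w =>
            obtain ⟨hw, hwt⟩ := tau_some o2
            exfalso
            have : a i - a j = ((w - z : ℤ) : ZMod m) := by
              have : a i - a j = (x - a j) - (x - a i) := by ring
              rw [this, hw, hxz]; push_cast; ring
            rw [this, tau_cast (s := 2 * t) _ (by omega) le_rfl (by omega),
              if_pos (by omega)] at o
            exact Option.some_ne_none _ o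
        have l2 : tau n t ((b i + (z : ZMod n)) - b j) = none := by
          cases o2 : tau n t ((b i + (z : ZMod n)) - b j) with
          | none => rfl
          | some w =>
            obtain ⟨hw, hwt⟩ := tau_some o2
            exfalso
            have : b i - b j = ((w - z : ℤ) : ZMod n) := by
              have hh : (b i + (z : ZMod n)) - b j - (z : ZMod n) = b i - b j := by ring
              rw [← hh, hw]; push_cast; ring
            rw [this, tau_cast (s := 2 * t) _ (by omega) le_rfl (by omega),
              if_pos (by omega)] at o'
            exact Option.some_ne_none _ o'
        rw [l1, l2]
    · push_neg at hc
      have hfar : ∀ i, tau m t (x - a i) = none := by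
        intro i
        cases o : tau m t (x - a i) with
        | none => rfl
        | some w => exact absurd o (hc i w)
      classical
      set S : Finset (ZMod n) :=
        Finset.univ.biUnion
          (fun i : Fin l => (Finset.Icc (-(t : ℤ)) t).image (fun z : ℤ => b i + (z : ZMod n)))
        with hS
      have hcard : S.card < n := by
        calc S.card ≤ ∑ i : Fin l, ((Finset.Icc (-(t : ℤ)) t).image
            (fun z : ℤ => b i + (z : ZMod n))).card := Finset.card_biUnion_le
          _ ≤ ∑ _i : Fin l, (2 * t + 1) := Finset.sum_le_sum (fun i _ => by
              refine le_trans Finset.card_image_le ?_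
              rw [Int.card_Icc]
              omega)
          _ = l * (2 * t + 1) := by simp [Finset.sum_const, mul_comm]
          _ < n := hln
      have : ∃ y : ZMod n, y ∉ S := by
        by_contra hy
        push_neg at hy
        have : (Finset.univ : Finset (ZMod n)).card ≤ S.card :=
          Finset.card_le_card (fun y _ => hy y)
        rw [Finset.card_univ, ZMod.card] at this
        omega
      obtain ⟨y, hy⟩ := this
      refine ⟨y, fun j => ?_⟩
      rw [hfar j]
      cases o : tau n t (y - b j) with
      | none => rfl
      | some w =>
        exfalso
        obtain ⟨hw, hwt⟩ := tau_some o
        apply hy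
        rw [hS]
        refine Finset.mem_biUnion.2 ⟨j, Finset.mem_univ _, Finset.mem_image.2 ⟨w, ?_, ?_⟩⟩
        · rw [Finset.mem_Icc]; omega
        · rw [← hw]; ring
  obtain ⟨y, hy⟩ := main
  refine ⟨y, fun p q => ?_⟩
  refine Fin.lastCases ?_ (fun p' => ?_) p
  · refine Fin.lastCases ?_ (fun q' => ?_) q
    · simp only [Fin.snoc_last]
      rw [sub_self, sub_self, tau_zero, tau_zero]
    · simp only [Fin.snoc_last, Fin.snoc_castSucc]
      exact hy q'
  · refine Fin.lastCases ?_ (fun q' => ?_) q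
    · simp only [Fin.snoc_last, Fin.snoc_castSucc]
      rw [← neg_sub x (a p'), ← neg_sub y (b p'), tau_neg (by omega), tau_neg (by omega), hy p']
    · simp only [Fin.snoc_castSucc]
      exact tau_mono (by omega) (by omega) (h p' q')

/-! ### Quantifier rank and the Ehrenfeucht–Fraïssé argument -/

/-- Quantifier rank of a bounded formula. -/
def qr : ∀ {l : ℕ}, Language.graph.BoundedFormula Empty l → ℕ
  | _, .falsum => 0
  | _, .equal _ _ => 0
  | _, .rel _ _ => 0
  | _, .imp f g => max (qr f) (qr g)
  | _, .all f => qr f + 1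

lemma term_eq_var {l : ℕ} (t : Language.graph.Term (Empty ⊕ Fin l)) :
    ∃ i : Fin l, t = FirstOrder.Language.Term.var (Sum.inr i) := by
  cases t with
  | var v =>
    cases v with
    | inl e => exact e.elim
    | inr i => exact ⟨i, rfl⟩
  | func f _ => exact f.elim

lemma main : ∀ {l : ℕ} (φ : Language.graph.BoundedFormula Empty l) (k : ℕ), qr φ ≤ k →
    ∀ (m n : ℕ) [NeZero m] [NeZero n], 2 ^ (k + 2) * (l + 2) < m → 2 ^ (k + 2) * (l + 2) < n →
    ∀ (a : Fin l → ZMod m) (b : Fin l → ZMod n), Matched m n (2 ^ k) a b →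
    (φ.Realize Empty.elim a ↔ φ.Realize Empty.elim b) := by
  intro l φ
  induction φ with
  | falsum =>
    intro k hk m n _ _ hm hn a b hab
    simp [Language.BoundedFormula.Realize]
  | equal t₁ t₂ =>
    intro k hk m n _ _ hm hn a b hab
    obtain ⟨i, rfl⟩ := term_eq_var t₁
    obtain ⟨j, rfl⟩ := term_eq_var t₂
    simp only [Language.BoundedFormula.Realize, Language.Term.realize_var, Sum.elim_inr]
    have h := hab i j
    constructor
    · intro hij
      have h0 : a i - a j = 0 := sub_eq_zero.2 hij
      rw [h0, tau_zero] at h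
      have h1 := (tau_some h.symm).1
      rw [Int.cast_zero] at h1
      exact sub_eq_zero.1 h1
    · intro hij
      have h0 : b i - b j = 0 := sub_eq_zero.2 hij
      rw [h0, tau_zero] at h
      have h1 := (tau_some h).1
      rw [Int.cast_zero] at h1
      exact sub_eq_zero.1 h1
  | @rel l' nr R ts =>
    intro k hk m n _ _ hm hn a b hab
    cases R
    obtain ⟨i, hi⟩ := term_eq_var (ts 0)
    obtain ⟨j, hj⟩ := term_eq_var (ts 1)
    have hp1 : (1:ℕ) ≤ 2 ^ k := Nat.one_le_two_pow
    have e2 : (2:ℕ) ^ (k + 2) = 4 * 2 ^ k := by rw [pow_add]; ring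
    rw [e2] at hm hn
    have h2 : (2:ℕ) * 2 ^ k < m ∧ (2:ℕ) * 2 ^ k < n := by
      constructor <;> nlinarith
    have key : (CycleG m).Adj (a i) (a j) ↔ (CycleG n).Adj (b i) (b j) := by
      rw [adj_iff_tau (Nat.one_le_two_pow) h2.1, adj_iff_tau (Nat.one_le_two_pow) h2.2, hab i j]
    simp only [Language.BoundedFormula.Realize, relMap_adj, hi, hj,
      Language.Term.realize_var, Sum.elim_inr]
    exact key
  | @imp l' f g ihf ihg =>
    intro k hk m n _ _ hm hn a b hab
    simp only [qr] at hk
    simp only [Language.BoundedFormula.Realize]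
    rw [ihf k (le_trans (le_max_left _ _) hk) m n hm hn a b hab,
      ihg k (le_trans (le_max_right _ _) hk) m n hm hn a b hab]
  | @all l' f ih =>
    intro k hk m n _ _ hm hn a b hab
    simp only [qr] at hk
    obtain ⟨k', rfl⟩ : ∃ k', k = k' + 1 := ⟨k - 1, by omega⟩
    have hp1 : (1:ℕ) ≤ 2 ^ k' := Nat.one_le_two_pow
    have hpl : l' * 1 ≤ l' * 2 ^ k' := Nat.mul_le_mul_left l' hp1
    have e1 : (2:ℕ) ^ (k' + 1 + 2) = 8 * 2 ^ k' := by rw [pow_add, pow_add]; ring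
    have e2 : (2:ℕ) ^ (k' + 2) = 4 * 2 ^ k' := by rw [pow_add]; ring
    rw [e1] at hm hn
    have hb' : (2:ℕ) ^ (k' + 2) * (l' + 1 + 2) < m ∧ (2:ℕ) ^ (k' + 2) * (l' + 1 + 2) < n := by
      rw [e2]
      constructor <;> nlinarith
    have hext : (6:ℕ) * 2 ^ k' < m ∧ (6:ℕ) * 2 ^ k' < n ∧ l' * (2 * 2 ^ k' + 1) < n ∧
        l' * (2 * 2 ^ k' + 1) < m := by
      refine ⟨by nlinarith, by nlinarith, by nlinarith, by nlinarith⟩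
    have hab' : Matched m n (2 * 2 ^ k') a b := by
      have e3 : (2:ℕ) ^ (k' + 1) = 2 * 2 ^ k' := by rw [pow_add]; ring
      rwa [e3] at hab
    simp only [Language.BoundedFormula.Realize]
    constructor
    · intro hall y
      obtain ⟨x, hx⟩ := extend Nat.one_le_two_pow hext.2.1 hext.1 hext.2.2.2 hab'.symm y
      exact (ih k' (by omega) m n hb'.1 hb'.2 _ _ hx.symm).1 (hall x)
    · intro hall x
      obtain ⟨y, hy⟩ := extend Nat.one_le_two_pow hext.1 hext.2.1 hext.2.2.1 hab' x
      exact (ih k' (by omega) m n hb'.1 hb'.2 _ _ hy).2 (hall y)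

/-! ### Bipartiteness of cycles -/

lemma cycle_bipartite {m : ℕ} [NeZero m] (hm : 1 < m) (he : m % 2 = 0) :
    (CycleG m).IsBipartite' := by
  haveI : Fact (1 < m) := ⟨hm⟩
  refine ⟨{x | x.val % 2 = 0}, {x | x.val % 2 = 1}, ⟨0, by simp [ZMod.val_zero]⟩,
    ⟨1, by simp [ZMod.val_one]⟩, ?_, ?_, ?_⟩
  · rw [Set.disjoint_left]
    intro x hx hx'
    simp only [Set.mem_setOf_eq] at hx hx'
    omega
  · ext x
    simp only [Set.mem_union, Set.mem_setOf_eq, Set.mem_univ, iff_true]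
    omega
  · have step : ∀ y : ZMod m, (y + 1).val % 2 ≠ y.val % 2 := by
      intro y
      have h1 : (y + 1).val = (y.val + (1 : ZMod m).val) % m := ZMod.val_add y 1
      rw [ZMod.val_one] at h1
      have h2 : y.val < m := ZMod.val_lt y
      by_cases h3 : y.val + 1 < m
      · rw [Nat.mod_eq_of_lt h3] at h1
        omega
      · have h4 : y.val + 1 = m := by omega
        rw [h4, Nat.mod_self] at h1
        omega
    intro x y hxy
    rw [cycleG_adj] at hxy
    have hp : x.val % 2 ≠ y.val % 2 := by
      rcases hxy.2 with h | h
      · have : x = y + 1 := by rw [← h]; ring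
        rw [this]; exact step y
      · have : y = x + 1 := by rw [← h]; ring
        rw [this]; exact (step x).symm
    simp only [Set.mem_setOf_eq]
    omega

lemma odd_walk {m : ℕ} (A B : Set (ZMod m)) (hd : Disjoint A B)
    (hstep : ∀ x : ZMod m, (x ∈ A → x + 1 ∈ B) ∧ (x ∈ B → x + 1 ∈ A))
    (h0 : (0 : ZMod m) ∈ A) :
    ∀ k : ℕ, (k % 2 = 0 → (k : ZMod m) ∈ A) ∧ (k % 2 = 1 → (k : ZMod m) ∈ B) := by
  intro k
  induction k with
  | zero => exact ⟨fun _ => by rw [Nat.cast_zero]; exact h0, fun h => by omega⟩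
  | succ k ih =>
    push_cast
    constructor
    · intro hk
      exact (hstep k).2 (ih.2 (by omega))
    · intro hk
      exact (hstep k).1 (ih.1 (by omega))

lemma cycle_not_bipartite {m : ℕ} [NeZero m] (hm : 1 < m) (ho : m % 2 = 1) :
    ¬ (CycleG m).IsBipartite' := by
  haveI : Fact (1 < m) := ⟨hm⟩
  rintro ⟨A, B, -, -, hd, hu, he⟩
  have hadj : ∀ x : ZMod m, (CycleG m).Adj x (x + 1) := by
    intro x
    rw [cycleG_adj]
    refine ⟨?_, Or.inr (by ring)⟩
    intro h
    have : (1 : ZMod m) = 0 := by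
      have := congrArg (· - x) h
      simpa using this.symm
    exact one_ne_zero this
  have hstep : ∀ x : ZMod m, (x ∈ A → x + 1 ∈ B) ∧ (x ∈ B → x + 1 ∈ A) := by
    intro x
    constructor
    · intro hx
      rcases he x (x + 1) (hadj x) with ⟨-, h⟩ | ⟨h, -⟩
      · exact h
      · exact absurd hx (Set.disjoint_right.1 hd h)
    · intro hx
      rcases he x (x + 1) (hadj x) with ⟨h, -⟩ | ⟨-, h⟩
      · exact absurd hx (Set.disjoint_left.1 hd h)
      · exact h
  have h0 : (0 : ZMod m) ∈ A ∪ B := hu ▸ Set.mem_univ 0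
  have hm0 : ((m : ZMod m)) = 0 := ZMod.natCast_self m
  rcases h0 with h0 | h0
  · have := (odd_walk A B hd hstep h0 m).2 ho
    rw [hm0] at this
    exact Set.disjoint_left.1 hd h0 this
  · have hstep' : ∀ x : ZMod m, (x ∈ B → x + 1 ∈ A) ∧ (x ∈ A → x + 1 ∈ B) :=
      fun x => ⟨(hstep x).2, (hstep x).1⟩
    have := (odd_walk B A hd.symm hstep' h0 m).2 ho
    rw [hm0] at this
    exact Set.disjoint_left.1 hd this h0

lemma sentence_realize_iff {N : ℕ} [NeZero N] (φ : Language.graph.Sentence) :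
    (@FirstOrder.Language.Sentence.Realize Language.graph (ZMod N) (cycleStructure N) φ) ↔
      Language.BoundedFormula.Realize (M := ZMod N) φ Empty.elim (fun i : Fin 0 => i.elim0) := by
  rw [Language.Sentence.Realize, Language.Formula.Realize]
  constructor <;> intro h <;>
    (convert h using 2 <;>
      first
        | exact funext (fun e : Empty => e.elim)
        | exact funext (fun i : Fin 0 => i.elim0)
        | exact (funext (fun e : Empty => e.elim)).symm
        | exact (funext (fun i : Fin 0 => i.elim0)).symm)

end BipAux

/-- There is no first-order sentence in the language with a single binary relation symbol
that holds in a finite simple graph (viewed as a structure via its adjacency relation)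
exactly when the graph is bipartite: finite bipartite graphs are not finitely axiomatizable
modulo finiteness. -/
theorem finite_bipartite_graphs_not_finitely_axiomatizable :
    ¬∃ φ : Language.graph.Sentence,
      ∀ (V : Type) [Fintype V] (G : SimpleGraph V),
        (@FirstOrder.Language.Sentence.Realize Language.graph V G.structure φ ↔
          G.IsBipartite') := by
  rintro ⟨φ, hφ⟩
  set k := BipAux.qr φ with hk
  set M : ℕ := 2 ^ (k + 4) with hM
  have hp1 : (1:ℕ) ≤ 2 ^ (k + 2) := Nat.one_le_two_pow
  have eM : M = 4 * 2 ^ (k + 2) := by rw [hM, pow_add]; ring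
  haveI : NeZero M := ⟨by omega⟩
  haveI : NeZero (M + 1) := ⟨by omega⟩
  have hM1 : 1 < M := by omega
  have hMeven : M % 2 = 0 := by omega
  have hbound1 : 2 ^ (k + 2) * (0 + 2) < M := by omega
  have hbound2 : 2 ^ (k + 2) * (0 + 2) < M + 1 := by omega
  -- the even cycle satisfies φ
  have h1 : @FirstOrder.Language.Sentence.Realize Language.graph (ZMod M)
      (BipAux.cycleStructure M) φ :=
    (hφ (ZMod M) (BipAux.CycleG M)).2 (BipAux.cycle_bipartite hM1 hMeven)
  -- transfer to the odd cycle
  have h2 := BipAux.main φ k le_rfl M (M + 1) hbound1 hbound2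
    (fun i : Fin 0 => i.elim0) (fun i : Fin 0 => i.elim0) (fun i => i.elim0)
  have h3 : @FirstOrder.Language.Sentence.Realize Language.graph (ZMod (M + 1))
      (BipAux.cycleStructure (M + 1)) φ := by
    rw [BipAux.sentence_realize_iff]
    exact h2.1 ((BipAux.sentence_realize_iff φ).1 h1)
  -- but the odd cycle is not bipartite
  have h4 : (BipAux.CycleG (M + 1)).IsBipartite' :=
    (hφ (ZMod (M + 1)) (BipAux.CycleG (M + 1))).1 h3
  exact BipAux.cycle_not_bipartite (by omega) (by omega) h4
end

section
/- There is no first-order sentence φ in the first-order language of groups (one binary function symbol for the group operation, and equality) such that for every finite group G, the structure G satisfies φ if and only if G is a simple group. Equivalently, the class of finite simple groups is not finitely axiomatizable modulo finiteness. -/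
open FirstOrder

/-- The arities of the function symbols of the language of groups: a single binary function
symbol (the group operation). -/
def grpFun : ℕ → Type
  | 2 => Unit
  | _ => Empty

/-- The first-order language of groups: one binary function symbol for the group operation
(and equality), no relation symbols. -/
def grpLang : FirstOrder.Language :=
  ⟨grpFun, fun _ => Empty⟩

/-- The `grpLang`-structure on a type with a multiplication: the binary function symbol is
interpreted as the multiplication. -/
def grpStructure (G : Type*) [Mul G] : grpLang.Structure G where
  funMap {n} f x :=
    match n, f, x with
    | 0, f, _ => f.elim
    | 1, f, _ => f.elim
    | 2, _, x => x 0 * x 1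
    | _ + 3, f, _ => f.elim
  RelMap {_} r := r.elim

/-! ### Auxiliary material

We prove the theorem via the classical ultraproduct argument: if a sentence `φ` held in a
finite group iff the group is simple, then the ultraproducts (over a nonprincipal ultrafilter)
of the groups `ZMod p` (simple) and `ZMod p²` (not simple) would disagree about `φ` by Łoś's
theorem; but both ultraproducts are divisible torsion-free abelian groups of cardinality
continuum, i.e. `ℚ`-vector spaces of the same rank, hence isomorphic, a contradiction. -/

open Filter Cardinal

section RatModule

variable {A : Type} [AddCommGroup A]

theorem aux_zsmul_inj (htf : ∀ (k : ℕ), 0 < k → ∀ x : A, k • x = 0 → x = 0)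
    {m : ℤ} (hm : m ≠ 0) {x y : A} (h : m • x = m • y) : x = y := by
  have h0 : m • (x - y) = 0 := by rw [smul_sub, h, sub_self]
  have hna : (m.natAbs : ℕ) • (x - y) = 0 := by
    rcases Int.natAbs_eq m with he | he
    · rw [← natCast_zsmul, ← he, h0]
    · rw [← natCast_zsmul, ← neg_neg ((m.natAbs : ℤ)), ← he, neg_smul, h0, neg_zero]
  exact sub_eq_zero.1 (htf m.natAbs (Int.natAbs_pos.2 hm) _ hna)

theorem aux_den_cast_ne_zero (q : ℚ) : (q.den : ℤ) ≠ 0 := by exact_mod_cast q.den_nz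

theorem aux_den_mul_self (q : ℚ) : ((q.den : ℚ)) * q = (q.num : ℚ) := by
  have hd : ((q.den : ℚ)) ≠ 0 := by exact_mod_cast q.den_nz
  rw [mul_comm]
  exact ((div_eq_iff hd).1 (Rat.num_div_den q)).symm

theorem aux_zsmul_comm (a b : ℤ) (x : A) : a • (b • x) = b • (a • x) := by
  rw [smul_smul, smul_smul, mul_comm]

noncomputable def auxQsmul (hdiv : ∀ (k : ℕ), 0 < k → ∀ x : A, ∃ y : A, k • y = x)
    (q : ℚ) (x : A) : A :=
  (hdiv q.den q.pos (q.num • x)).choose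

variable (hdiv : ∀ (k : ℕ), 0 < k → ∀ x : A, ∃ y : A, k • y = x)
variable (htf : ∀ (k : ℕ), 0 < k → ∀ x : A, k • x = 0 → x = 0)

theorem auxQsmul_spec (q : ℚ) (x : A) : (q.den : ℤ) • auxQsmul hdiv q x = q.num • x := by
  rw [natCast_zsmul]
  exact (hdiv q.den q.pos (q.num • x)).choose_spec

include htf

theorem aux_smul_qsmul {q : ℚ} {a b : ℤ} (hq : (b : ℚ) * q = (a : ℚ)) (x : A) :
    b • auxQsmul hdiv q x = a • x := by
  have key : b * q.num = a * q.den := by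
    have h2 := aux_den_mul_self q
    have h1 : (b : ℚ) * q.num = (a : ℚ) * q.den := by
      linear_combination (q.den : ℚ) * hq - (b : ℚ) * h2
    exact_mod_cast h1
  apply aux_zsmul_inj htf (aux_den_cast_ne_zero q)
  rw [aux_zsmul_comm, auxQsmul_spec hdiv, smul_smul, smul_smul, key, mul_comm (q.den : ℤ) a]

theorem auxQsmul_eq_iff {q : ℚ} {x y : A} :
    auxQsmul hdiv q x = y ↔ (q.den : ℤ) • y = q.num • x := by
  constructor
  · rintro rfl; exact auxQsmul_spec hdiv q x
  · intro h
    exact aux_zsmul_inj htf (aux_den_cast_ne_zero q) ((auxQsmul_spec hdiv q x).trans h.symm)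

/-- A divisible torsion-free abelian group is a `ℚ`-vector space. -/
noncomputable def auxRatModule : Module ℚ A :=
  letI : SMul ℚ A := ⟨auxQsmul hdiv⟩
  have hsmul : ∀ (q : ℚ) (x : A), q • x = auxQsmul hdiv q x := fun _ _ => rfl
  { one_smul := fun x => by
      rw [hsmul, auxQsmul_eq_iff hdiv htf]; norm_num
    zero_smul := fun x => by
      rw [hsmul, auxQsmul_eq_iff hdiv htf]; norm_num
    smul_zero := fun q => by
      rw [hsmul, auxQsmul_eq_iff hdiv htf]; simp
    smul_add := fun q x y => by
      rw [hsmul, hsmul, hsmul, auxQsmul_eq_iff hdiv htf, smul_add, smul_add,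
        auxQsmul_spec hdiv, auxQsmul_spec hdiv]
    add_smul := fun q r x => by
      rw [hsmul, hsmul, hsmul]
      have hq1 := aux_den_mul_self q
      have hr1 := aux_den_mul_self r
      have hD : ((q.den : ℤ) * r.den) ≠ 0 :=
        mul_ne_zero (aux_den_cast_ne_zero q) (aux_den_cast_ne_zero r)
      have h1 : ((((q.den : ℤ) * r.den) : ℤ) : ℚ) * (q + r) =
          ((q.num * r.den + r.num * q.den : ℤ) : ℚ) := by
        push_cast
        linear_combination (r.den : ℚ) * hq1 + (q.den : ℚ) * hr1
      have h2 : ((((q.den : ℤ) * r.den) : ℤ) : ℚ) * q = ((q.num * r.den : ℤ) : ℚ) := by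
        push_cast
        linear_combination (r.den : ℚ) * hq1
      have h3 : ((((q.den : ℤ) * r.den) : ℤ) : ℚ) * r = ((r.num * q.den : ℤ) : ℚ) := by
        push_cast
        linear_combination (q.den : ℚ) * hr1
      apply aux_zsmul_inj htf hD
      rw [aux_smul_qsmul hdiv htf h1, smul_add, aux_smul_qsmul hdiv htf h2,
        aux_smul_qsmul hdiv htf h3, add_smul]
    mul_smul := fun q r x => by
      rw [hsmul, hsmul, hsmul]
      have hq1 := aux_den_mul_self q
      have hr1 := aux_den_mul_self r
      have hD : ((q.den : ℤ) * r.den) ≠ 0 :=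
        mul_ne_zero (aux_den_cast_ne_zero q) (aux_den_cast_ne_zero r)
      have h1 : ((((q.den : ℤ) * r.den) : ℤ) : ℚ) * (q * r) = ((q.num * r.num : ℤ) : ℚ) := by
        push_cast
        linear_combination ((r.den : ℚ) * r) * hq1 + (q.num : ℚ) * hr1
      have h2 : ((((q.den : ℤ) * r.den) : ℤ) : ℚ) * q = ((q.num * r.den : ℤ) : ℚ) := by
        push_cast
        linear_combination (r.den : ℚ) * hq1
      apply aux_zsmul_inj htf hD
      rw [aux_smul_qsmul hdiv htf h1, aux_smul_qsmul hdiv htf h2,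
        show ((q.num * r.den : ℤ)) • auxQsmul hdiv r x
          = q.num • ((r.den : ℤ) • auxQsmul hdiv r x) from (smul_smul _ _ _).symm,
        auxQsmul_spec hdiv, smul_smul] }

end RatModule

section UP

variable {G : ℕ → Type} [∀ n, CommGroup (G n)] {u : Ultrafilter ℕ}

namespace MyUP

def mk (u : Ultrafilter ℕ) (x : ∀ n, G n) : (u : Filter ℕ).Product G :=
  Quotient.mk ((u : Filter ℕ).productSetoid G) x

omit [∀ n, CommGroup (G n)] in
theorem mk_eq_mk {x y : ∀ n, G n} :
    mk u x = mk u y ↔ ∀ᶠ n in u, x n = y n := by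
  show Quotient.mk ((u : Filter ℕ).productSetoid G) x = Quotient.mk _ y ↔ _; rw [Quotient.eq]
  rfl

omit [∀ n, CommGroup (G n)] in
theorem exists_rep (p : (u : Filter ℕ).Product G) : ∃ x, mk u x = p :=
  Quotient.exists_rep p

instance : CommGroup ((u : Filter ℕ).Product G) where
  mul x y := Quotient.liftOn₂ x y (fun a b => mk u (fun n => a n * b n))
    (fun a₁ b₁ a₂ b₂ ha hb => mk_eq_mk.2 <| by
      filter_upwards [(ha : ∀ᶠ n in u, a₁ n = a₂ n), (hb : ∀ᶠ n in u, b₁ n = b₂ n)] with n h1 h2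
      rw [h1, h2])
  one := mk u (fun _ => 1)
  inv x := Quotient.liftOn x (fun a => mk u (fun n => (a n)⁻¹))
    (fun a₁ a₂ ha => mk_eq_mk.2 <| by
      filter_upwards [(ha : ∀ᶠ n in u, a₁ n = a₂ n)] with n h1
      rw [h1])
  mul_assoc x y z := by
    obtain ⟨a, rfl⟩ := exists_rep x
    obtain ⟨b, rfl⟩ := exists_rep y
    obtain ⟨c, rfl⟩ := exists_rep z
    exact congrArg (mk u) (funext fun n => mul_assoc _ _ _)
  one_mul x := by
    obtain ⟨a, rfl⟩ := exists_rep x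
    exact congrArg (mk u) (funext fun n => one_mul _)
  mul_one x := by
    obtain ⟨a, rfl⟩ := exists_rep x
    exact congrArg (mk u) (funext fun n => mul_one _)
  inv_mul_cancel x := by
    obtain ⟨a, rfl⟩ := exists_rep x
    exact congrArg (mk u) (funext fun n => inv_mul_cancel _)
  mul_comm x y := by
    obtain ⟨a, rfl⟩ := exists_rep x
    obtain ⟨b, rfl⟩ := exists_rep y
    exact congrArg (mk u) (funext fun n => mul_comm _ _)

theorem mk_mul (x y : ∀ n, G n) : mk u x * mk u y = mk u (fun n => x n * y n) := rfl

theorem mk_one : (1 : (u : Filter ℕ).Product G) = mk u (fun _ => 1) := rfl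

theorem mk_pow (x : ∀ n, G n) (k : ℕ) : (mk u x) ^ k = mk u (fun n => (x n) ^ k) := by
  induction k with
  | zero => exact congrArg (mk u) (funext fun n => (pow_zero _).symm)
  | succ k ih =>
    rw [pow_succ, ih, mk_mul]
    exact congrArg (mk u) (funext fun n => (pow_succ _ _).symm)

end MyUP

/-- the fiberwise structures -/
instance fibStructure : ∀ n, grpLang.Structure (G n) := fun n => grpStructure (G n)

theorem up_funMap (f : grpLang.Functions 2) (x : Fin 2 → (u : Filter ℕ).Product G) :
    Language.Structure.funMap (M := (u : Filter ℕ).Product G) f x = x 0 * x 1 := by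
  have h : ∀ i, ∃ v, MyUP.mk u v = x i := fun i => MyUP.exists_rep (x i)
  choose v hv using h
  have hx : x = fun i => MyUP.mk u (v i) := funext fun i => (hv i).symm
  subst hx
  have := Language.Ultraproduct.funMap_cast (u := u) (M := G) f v
  exact this

/-- Build a first-order equivalence from a `MulEquiv` of ultraproducts. -/
def mulEquivToLEquiv {G₁ G₂ : ℕ → Type} [∀ n, CommGroup (G₁ n)] [∀ n, CommGroup (G₂ n)]
    {u : Ultrafilter ℕ}
    (e : ((u : Filter ℕ).Product G₁) ≃* ((u : Filter ℕ).Product G₂)) :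
    @Language.Equiv grpLang ((u : Filter ℕ).Product G₁) ((u : Filter ℕ).Product G₂)
      (Language.Ultraproduct.structure) (Language.Ultraproduct.structure) where
  toEquiv := e.toEquiv
  map_fun' := by
    intro n f x
    match n, f with
    | 2, f =>
      show e (Language.Structure.funMap f x)
        = Language.Structure.funMap f (fun i => e (x i))
      rw [up_funMap, up_funMap]
      exact map_mul e _ _
    | 0, f => exact f.elim
    | 1, f => exact f.elim
    | (n+3), f => exact f.elim
  map_rel' := by intro n r; exact r.elim

end UP

/-! ### Binary prefix encoding, for the cardinality lower bound -/

def bsum (a : ℕ → Bool) : ℕ → ℕ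
  | 0 => 0
  | n + 1 => 2 * bsum a n + (a n).toNat

theorem bsum_lt (a : ℕ → Bool) (n : ℕ) : bsum a n < 2 ^ n := by
  induction n with
  | zero => simp [bsum]
  | succ n ih =>
    have : (a n).toNat ≤ 1 := by cases a n <;> simp
    rw [bsum, pow_succ]
    omega

theorem bsum_step {a b : ℕ → Bool} {n : ℕ} (h : bsum a (n + 1) = bsum b (n + 1)) :
    bsum a n = bsum b n ∧ a n = b n := by
  rw [bsum, bsum] at h
  cases ha : a n <;> cases hb : b n <;> rw [ha, hb] at h <;> simp at h ⊢ <;> omega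

theorem bsum_down {a b : ℕ → Bool} : ∀ {n : ℕ}, bsum a n = bsum b n →
    ∀ k < n, a k = b k := by
  intro n
  induction n with
  | zero => intro _ k hk; omega
  | succ n ih =>
    intro h k hk
    obtain ⟨h1, h2⟩ := bsum_step h
    rcases Nat.lt_succ_iff_lt_or_eq.1 hk with hk' | rfl
    · exact ih h1 k hk'
    · exact h2

/-! ### Cardinality of the ultraproducts -/

section Card

variable {m : ℕ → ℕ} (hm : ∀ n, 2 ^ n < m n)

include hm

theorem neZero_m (n : ℕ) : NeZero (m n) :=
  ⟨(lt_of_le_of_lt (Nat.zero_le (2 ^ n)) (hm n)).ne'⟩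

theorem card_up_le :
    #(((hyperfilter ℕ : Ultrafilter ℕ) : Filter ℕ).Product
      (fun n => Multiplicative (ZMod (m n)))) ≤ 𝔠 := by
  haveI : ∀ n, NeZero (m n) := neZero_m hm
  refine le_trans mk_quotient_le ?_
  rw [mk_pi]
  refine le_trans (prod_le_prod _ (fun _ => ℵ₀) (fun n => ?_)) ?_
  · exact mk_le_aleph0
  · rw [prod_const', mk_nat, aleph0_power_aleph0]

theorem card_up_ge :
    𝔠 ≤ #(((hyperfilter ℕ : Ultrafilter ℕ) : Filter ℕ).Product
      (fun n => Multiplicative (ZMod (m n)))) := by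
  haveI : ∀ n, NeZero (m n) := neZero_m hm
  have hinj : Function.Injective
      (fun a : ℕ → Bool => MyUP.mk (hyperfilter ℕ)
        (fun n => (Multiplicative.ofAdd ((bsum a n : ZMod (m n)))))) := by
    intro a b hab
    have hT : {n | (Multiplicative.ofAdd ((bsum a n : ZMod (m n))))
        = Multiplicative.ofAdd ((bsum b n : ZMod (m n)))} ∈ hyperfilter ℕ :=
      MyUP.mk_eq_mk.1 hab
    have hT' : {n | bsum a n = bsum b n} ∈ hyperfilter ℕ := by
      filter_upwards [hT] with n hn
      have : ((bsum a n : ZMod (m n))) = ((bsum b n : ZMod (m n))) := by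
        exact_mod_cast hn
      have hva := ZMod.val_cast_of_lt (lt_trans (bsum_lt a n) (hm n))
      have hvb := ZMod.val_cast_of_lt (lt_trans (bsum_lt b n) (hm n))
      rw [← hva, ← hvb, this]
    have hInf : {n | bsum a n = bsum b n}.Infinite := by
      by_contra hfin
      rw [Set.not_infinite] at hfin
      exact Set.Finite.notMem_hyperfilter hfin hT'
    funext k
    obtain ⟨n, hn, hkn⟩ := hInf.exists_gt k
    exact bsum_down hn k hkn
  have h1 : #(ℕ → Bool) = 𝔠 := by
    rw [mk_arrow, mk_bool, mk_nat, lift_aleph0, lift_ofNat, two_power_aleph0]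
  rw [← h1]
  exact mk_le_of_injective hinj

theorem card_up :
    #(((hyperfilter ℕ : Ultrafilter ℕ) : Filter ℕ).Product
      (fun n => Multiplicative (ZMod (m n)))) = 𝔠 :=
  le_antisymm (card_up_le hm) (card_up_ge hm)

end Card

/-! ### Divisibility and torsion-freeness of the ultraproducts -/

section DivTF

variable {m : ℕ → ℕ}
variable (hcop : ∀ k : ℕ, 0 < k → ∀ᶠ n in (hyperfilter ℕ : Ultrafilter ℕ), Nat.Coprime k (m n))

include hcop

theorem up_div (k : ℕ) (hk : 0 < k)
    (x : ((hyperfilter ℕ : Ultrafilter ℕ) : Filter ℕ).Product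
      (fun n => Multiplicative (ZMod (m n)))) :
    ∃ y, y ^ k = x := by
  classical
  obtain ⟨f, rfl⟩ := MyUP.exists_rep x
  refine ⟨MyUP.mk _ (fun n => if h : Nat.Coprime k (m n) then
      Multiplicative.ofAdd ((((ZMod.unitOfCoprime k h)⁻¹ : (ZMod (m n))ˣ) : ZMod (m n))
        * (Multiplicative.toAdd (f n))) else 1), ?_⟩
  rw [MyUP.mk_pow, MyUP.mk_eq_mk]
  filter_upwards [hcop k hk] with n hn
  rw [dif_pos hn, ← ofAdd_nsmul, nsmul_eq_mul, ← mul_assoc]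
  have h1 : (k : ZMod (m n)) * (((ZMod.unitOfCoprime k hn)⁻¹ : (ZMod (m n))ˣ) : ZMod (m n))
      = 1 := by
    rw [← ZMod.coe_unitOfCoprime k hn, ← Units.val_mul, mul_inv_cancel, Units.val_one]
  rw [h1, one_mul]
  exact ofAdd_toAdd (f n)

theorem up_tf (k : ℕ) (hk : 0 < k)
    (x : ((hyperfilter ℕ : Ultrafilter ℕ) : Filter ℕ).Product
      (fun n => Multiplicative (ZMod (m n)))) (hx : x ^ k = 1) :
    x = 1 := by
  obtain ⟨f, rfl⟩ := MyUP.exists_rep x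
  rw [MyUP.mk_pow, MyUP.mk_one, MyUP.mk_eq_mk] at hx
  rw [MyUP.mk_one, MyUP.mk_eq_mk]
  filter_upwards [hx, hcop k hk] with n h1 h2
  have h3 : (k : ZMod (m n)) * (Multiplicative.toAdd (f n)) = 0 := by
    rw [← nsmul_eq_mul, ← toAdd_pow, h1]
    rfl
  have h4 : (Multiplicative.toAdd (f n)) = 0 := by
    have h5 := congrArg
      (fun z => (((ZMod.unitOfCoprime k h2)⁻¹ : (ZMod (m n))ˣ) : ZMod (m n)) * z) h3
    simp only [mul_zero] at h5
    rw [← mul_assoc] at h5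
    have h6 : (((ZMod.unitOfCoprime k h2)⁻¹ : (ZMod (m n))ˣ) : ZMod (m n))
        * (k : ZMod (m n)) = 1 := by
      rw [← ZMod.coe_unitOfCoprime k h2, ← Units.val_mul, inv_mul_cancel, Units.val_one]
    rwa [h6, one_mul] at h5
  calc f n = Multiplicative.ofAdd (Multiplicative.toAdd (f n)) :=
        (ofAdd_toAdd (f n)).symm
    _ = Multiplicative.ofAdd 0 := by rw [h4]
    _ = 1 := rfl

end DivTF

/-! ### Simplicity facts -/

theorem simple_zmod_mult (q : ℕ) (hq : q.Prime) :
    IsSimpleGroup (Multiplicative (ZMod q)) := by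
  haveI : Fact q.Prime := ⟨hq⟩
  haveI : NeZero q := ⟨hq.ne_zero⟩
  refine isSimpleGroup_of_prime_card (p := q) ?_
  rw [Nat.card_congr Multiplicative.toAdd, Nat.card_zmod]

theorem not_simple_zmod_sq_mult (q : ℕ) (hq : q.Prime) :
    ¬ IsSimpleGroup (Multiplicative (ZMod (q * q))) := by
  intro h
  haveI : NeZero (q * q) := ⟨Nat.mul_ne_zero hq.ne_zero hq.ne_zero⟩
  haveI : Finite (Multiplicative (ZMod (q * q))) := inferInstance
  have hp := IsSimpleGroup.prime_card (α := Multiplicative (ZMod (q * q)))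
  rw [Nat.card_congr Multiplicative.toAdd, Nat.card_zmod] at hp
  rcases Nat.prime_mul_iff.1 hp with ⟨_, h1⟩ | ⟨_, h1⟩ <;>
    exact absurd h1 (Nat.Prime.one_lt hq).ne'

/-! ### The isomorphism between the two ultraproducts -/

/-- Two families of finite nontrivial cyclic groups with eventually coprime orders give
isomorphic (as groups) ultraproducts, provided both are divisible, torsion-free, and of
cardinality continuum.  Stated concretely for `ZMod`. -/
noncomputable def upMulEquiv {m₁ m₂ : ℕ → ℕ}
    (hm₁ : ∀ n, 2 ^ n < m₁ n) (hm₂ : ∀ n, 2 ^ n < m₂ n)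
    (hcop₁ : ∀ k : ℕ, 0 < k → ∀ᶠ n in (hyperfilter ℕ : Ultrafilter ℕ), Nat.Coprime k (m₁ n))
    (hcop₂ : ∀ k : ℕ, 0 < k → ∀ᶠ n in (hyperfilter ℕ : Ultrafilter ℕ), Nat.Coprime k (m₂ n)) :
    (((hyperfilter ℕ : Ultrafilter ℕ) : Filter ℕ).Product
      (fun n => Multiplicative (ZMod (m₁ n)))) ≃*
    (((hyperfilter ℕ : Ultrafilter ℕ) : Filter ℕ).Product
      (fun n => Multiplicative (ZMod (m₂ n)))) := by
  set P₁ := (((hyperfilter ℕ : Ultrafilter ℕ) : Filter ℕ).Product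
      (fun n => Multiplicative (ZMod (m₁ n)))) with hP₁
  set P₂ := (((hyperfilter ℕ : Ultrafilter ℕ) : Filter ℕ).Product
      (fun n => Multiplicative (ZMod (m₂ n)))) with hP₂
  have hdiv₁ : ∀ (k : ℕ), 0 < k → ∀ x : Additive P₁, ∃ y : Additive P₁, k • y = x := by
    intro k hk x
    obtain ⟨y, hy⟩ := up_div hcop₁ k hk (Additive.toMul (α := P₁) x)
    refine ⟨Additive.ofMul y, ?_⟩
    have : (k • Additive.ofMul y).toMul = (Additive.toMul (α := P₁) x) := by
      rw [toMul_nsmul]; exact hy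
    exact congrArg Additive.ofMul this
  have hdiv₂ : ∀ (k : ℕ), 0 < k → ∀ x : Additive P₂, ∃ y : Additive P₂, k • y = x := by
    intro k hk x
    obtain ⟨y, hy⟩ := up_div hcop₂ k hk (Additive.toMul (α := P₂) x)
    refine ⟨Additive.ofMul y, ?_⟩
    have : (k • Additive.ofMul y).toMul = (Additive.toMul (α := P₂) x) := by
      rw [toMul_nsmul]; exact hy
    exact congrArg Additive.ofMul this
  have htf₁ : ∀ (k : ℕ), 0 < k → ∀ x : Additive P₁, k • x = 0 → x = 0 := by
    intro k hk x hx
    have h0 := congrArg (Additive.toMul (α := P₁)) hx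
    rw [toMul_nsmul, toMul_zero] at h0
    have := up_tf hcop₁ k hk (Additive.toMul (α := P₁) x) h0
    calc x = Additive.ofMul (Additive.toMul (α := P₁) x) := rfl
      _ = Additive.ofMul 1 := by rw [this]
      _ = 0 := rfl
  have htf₂ : ∀ (k : ℕ), 0 < k → ∀ x : Additive P₂, k • x = 0 → x = 0 := by
    intro k hk x hx
    have h0 := congrArg (Additive.toMul (α := P₂)) hx
    rw [toMul_nsmul, toMul_zero] at h0
    have := up_tf hcop₂ k hk (Additive.toMul (α := P₂) x) h0
    calc x = Additive.ofMul (Additive.toMul (α := P₂) x) := rfl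
      _ = Additive.ofMul 1 := by rw [this]
      _ = 0 := rfl
  letI M₁ : Module ℚ (Additive P₁) := auxRatModule hdiv₁ htf₁
  letI M₂ : Module ℚ (Additive P₂) := auxRatModule hdiv₂ htf₂
  have hc₁ : #(Additive P₁) = 𝔠 := (mk_congr (Additive.ofMul.symm)).trans (card_up hm₁)
  have hc₂ : #(Additive P₂) = 𝔠 := (mk_congr (Additive.ofMul.symm)).trans (card_up hm₂)
  have hr₁ : Module.rank ℚ (Additive P₁) = 𝔠 := by
    rw [Module.Free.rank_eq_mk_of_infinite_lt, hc₁]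
    rw [lift_id, lift_id, mk_denumerable, hc₁]
    exact aleph0_lt_continuum
  have hr₂ : Module.rank ℚ (Additive P₂) = 𝔠 := by
    rw [Module.Free.rank_eq_mk_of_infinite_lt, hc₂]
    rw [lift_id, lift_id, mk_denumerable, hc₂]
    exact aleph0_lt_continuum
  have hne := nonempty_linearEquiv_of_rank_eq (R := ℚ) (M := Additive P₁) (M₁ := Additive P₂)
    (hr₁.trans hr₂.symm)
  exact ((MulEquiv.multiplicativeAdditive P₁).symm.trans
    ((AddEquiv.toMultiplicative (Classical.choice hne).toAddEquiv).trans
      (MulEquiv.multiplicativeAdditive P₂)))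

/-! ### The main theorem -/

/-- There is no first-order sentence in the language of groups that holds in a finite group
exactly when the group is simple: finite simple groups are not finitely axiomatizable
modulo finiteness. -/
theorem finite_simple_groups_not_finitely_axiomatizable :
    ¬∃ φ : grpLang.Sentence,
      ∀ (G : Type) [Fintype G] [Group G],
        (@FirstOrder.Language.Sentence.Realize grpLang G (grpStructure G) φ ↔
          IsSimpleGroup G) := by
  rintro ⟨φ, hφ⟩
  -- choose primes p n > 2 ^ n
  have hex : ∀ n : ℕ, ∃ q : ℕ, 2 ^ n < q ∧ q.Prime := by
    intro n
    obtain ⟨q, hq1, hq2⟩ := Nat.exists_infinite_primes (2 ^ n + 1)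
    exact ⟨q, by omega, hq2⟩
  choose p hp1 hp2 using hex
  have hm₁ : ∀ n, 2 ^ n < p n := hp1
  have hm₂ : ∀ n, 2 ^ n < p n * p n := fun n =>
    lt_of_lt_of_le (hp1 n) (Nat.le_mul_of_pos_left _ (hp2 n).pos)
  -- eventual coprimality
  have hbig : ∀ k : ℕ, ∀ᶠ n in (hyperfilter ℕ : Ultrafilter ℕ), k < p n := by
    intro k
    refine Filter.Eventually.filter_mono Nat.hyperfilter_le_atTop ?_
    rw [Filter.eventually_atTop]
    exact ⟨k, fun n hn => lt_trans (lt_of_le_of_lt hn (Nat.lt_two_pow_self (n := n))) (hp1 n)⟩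
  have hcop₁ : ∀ k : ℕ, 0 < k →
      ∀ᶠ n in (hyperfilter ℕ : Ultrafilter ℕ), Nat.Coprime k (p n) := by
    intro k hk
    filter_upwards [hbig k] with n hn
    exact (((hp2 n).coprime_iff_not_dvd).2
      (fun hdvd => absurd (Nat.le_of_dvd hk hdvd) (not_le.2 hn))).symm
  have hcop₂ : ∀ k : ℕ, 0 < k →
      ∀ᶠ n in (hyperfilter ℕ : Ultrafilter ℕ), Nat.Coprime k (p n * p n) := by
    intro k hk
    filter_upwards [hcop₁ k hk] with n hn
    exact Nat.Coprime.mul_right hn hn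
  haveI : ∀ n, NeZero (p n) := fun n => ⟨(hp2 n).ne_zero⟩
  haveI : ∀ n, NeZero (p n * p n) := fun n => ⟨Nat.mul_ne_zero (hp2 n).ne_zero (hp2 n).ne_zero⟩
  letI i1 : ∀ n, grpLang.Structure (Multiplicative (ZMod (p n))) :=
    fun n => grpStructure _
  letI i2 : ∀ n, grpLang.Structure (Multiplicative (ZMod (p n * p n))) :=
    fun n => grpStructure _
  -- Łoś in both directions
  have h1 : @Language.Sentence.Realize grpLang
      (((hyperfilter ℕ : Ultrafilter ℕ) : Filter ℕ).Product
        (fun n => Multiplicative (ZMod (p n))))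
      (Language.Ultraproduct.structure) φ := by
    rw [Language.Ultraproduct.sentence_realize]
    refine Filter.Eventually.of_forall (fun n => ?_)
    exact (hφ (Multiplicative (ZMod (p n)))).2 (simple_zmod_mult (p n) (hp2 n))
  have h2 : ¬ @Language.Sentence.Realize grpLang
      (((hyperfilter ℕ : Ultrafilter ℕ) : Filter ℕ).Product
        (fun n => Multiplicative (ZMod (p n * p n))))
      (Language.Ultraproduct.structure) φ := by
    rw [Language.Ultraproduct.sentence_realize]
    intro h
    obtain ⟨n, hn⟩ := h.exists
    exact not_simple_zmod_sq_mult (p n) (hp2 n)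
      ((hφ (Multiplicative (ZMod (p n * p n)))).1 hn)
  -- the isomorphism of ultraproducts transfers φ
  have e := upMulEquiv hm₁ hm₂ hcop₁ hcop₂
  exact h2 ((Language.StrongHomClass.realize_sentence (mulEquivToLEquiv e) φ).1 h1)
end

section
/- There is no first-order sentence φ in the first-order language with a single binary relation symbol ≤ (and equality) such that for every finite distributive lattice D, the partially ordered set J(D) of join-irreducible elements of D satisfies φ if and only if D satisfies the Bipartite Maximal Elements Property. -/
open FirstOrder

section LatticeDefs

variable {α : Type*} [Lattice α] [OrderBot α]

/-- An element of a lattice with least element `⊥` is *join-irreducible* if it is not the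
least element and `x = y ⊔ z` implies `x = y` or `x = z`. -/
def JoinIrred (x : α) : Prop :=
  x ≠ ⊥ ∧ ∀ y z : α, x = y ⊔ z → x = y ∨ x = z

variable (α) in
/-- The set of maximal elements of the poset of join-irreducible elements. -/
def maxJI : Set α :=
  {a | JoinIrred a ∧ ∀ b : α, JoinIrred b → a ≤ b → a = b}

/-- `c` is covered by `a` in the poset of join-irreducible elements. -/
def JCovBy (c a : α) : Prop :=
  JoinIrred c ∧ JoinIrred a ∧ c < a ∧ ∀ d : α, JoinIrred d → c < d → d < a → False

variable (α) in
/-- The *Two-cover Property*: every join-irreducible element has at most two covers in the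
poset of join-irreducible elements. -/
def TwoCoverProperty : Prop :=
  ∀ x y z w : α, JCovBy x y → JCovBy x z → JCovBy x w → y = z ∨ y = w ∨ z = w

variable (α) in
/-- The *Bipartite Maximal Elements Property*: the set of maximal join-irreducible elements
is the disjoint union of two nonempty subsets such that no two distinct elements of the same
subset have a common lower cover in the poset of join-irreducible elements. -/
def BipartiteMaxElements : Prop :=
  ∃ A B : Set α, A.Nonempty ∧ B.Nonempty ∧ Disjoint A B ∧ A ∪ B = maxJI α ∧
    (∀ a ∈ A, ∀ b ∈ A, a ≠ b → ¬∃ c : α, JCovBy c a ∧ JCovBy c b) ∧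
    (∀ a ∈ B, ∀ b ∈ B, a ≠ b → ¬∃ c : α, JCovBy c a ∧ JCovBy c b)

/-- A *cyclic element*: the join of pairwise distinct maximal join-irreducible elements
`a 0, …, a (n-1)` (`n ≥ 3`) such that for `i < j`, some join-irreducible element lies below
both `a i` and `a j` if and only if `j = i + 1` or `(i, j) = (0, n - 1)`. -/
def IsCyclicElem (x : α) : Prop :=
  ∃ n : ℕ, 3 ≤ n ∧ ∃ a : Fin n → α, Function.Injective a ∧ (∀ i, a i ∈ maxJI α) ∧
    x = Finset.univ.sup a ∧
    ∀ i j : Fin n, i < j →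
      ((∃ c : α, JoinIrred c ∧ c ≤ a i ∧ c ≤ a j) ↔
        ((j : ℕ) = (i : ℕ) + 1 ∨ ((i : ℕ) = 0 ∧ (j : ℕ) = n - 1)))

/-- A *V-set* of `x`: a two-element subset of `maxJI α ∩ ↓x` whose two elements have a
common join-irreducible lower bound. -/
def IsVSet (x : α) (S : Set α) : Prop :=
  ∃ a₀ a₁ : α, a₀ ≠ a₁ ∧ S = {a₀, a₁} ∧ a₀ ∈ maxJI α ∧ a₁ ∈ maxJI α ∧ a₀ ≤ x ∧ a₁ ≤ x ∧
    ∃ c : α, JoinIrred c ∧ c ≤ a₀ ∧ c ≤ a₁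

/-- A *W-set* of `x`: a four-element subset `{a 0, a 1, a 2, a 3}` of `maxJI α ∩ ↓x` such
that for `i < j`, some join-irreducible element lies below both `a i` and `a j` if and only
if `j = i + 1`. -/
def IsWSet (x : α) (S : Set α) : Prop :=
  ∃ a : Fin 4 → α, Function.Injective a ∧ S = Set.range a ∧
    (∀ i, a i ∈ maxJI α ∧ a i ≤ x) ∧
    ∀ i j : Fin 4, i < j →
      ((∃ c : α, JoinIrred c ∧ c ≤ a i ∧ c ≤ a j) ↔ (j : ℕ) = (i : ℕ) + 1)

/-- A *VW-element*: a nonzero element `x` which is the join of `maxJI α ∩ ↓x`, such that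
each element of `maxJI α ∩ ↓x` either belongs to a unique V-set of `x` and to no W-set of
`x`, or belongs to a unique W-set of `x` and to no V-set of `x`. -/
def IsVWElem (x : α) : Prop :=
  x ≠ ⊥ ∧ IsLUB (maxJI α ∩ Set.Iic x) x ∧
    ∀ y ∈ maxJI α ∩ Set.Iic x,
      ((∃! S : Set α, IsVSet x S ∧ y ∈ S) ∧ ¬∃ S : Set α, IsWSet x S ∧ y ∈ S) ∨
      ((∃! S : Set α, IsWSet x S ∧ y ∈ S) ∧ ¬∃ S : Set α, IsVSet x S ∧ y ∈ S)

variable (α) in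
/-- The *Decomposable Cyclic Elements Property*: each cyclic element `x` is the join of two
VW-elements `y`, `z` with `maxJI α ∩ ↓y ∩ ↓z = ∅`. -/
def DecomposableCyclicElements : Prop :=
  ∀ x : α, IsCyclicElem x →
    ∃ y z : α, IsVWElem y ∧ IsVWElem z ∧ x = y ⊔ z ∧
      maxJI α ∩ Set.Iic y ∩ Set.Iic z = ∅

end LatticeDefs


/-! ### Auxiliary development -/

section NotExpressibleAux

lemma joinIrred_iff_supIrred {α : Type*} [Lattice α] [OrderBot α] {x : α} :
    JoinIrred x ↔ SupIrred x := by
  unfold JoinIrred SupIrred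
  rw [isMin_iff_eq_bot]
  constructor
  · rintro ⟨h1, h2⟩
    exact ⟨h1, fun b c h => (h2 b c h.symm).imp Eq.symm Eq.symm⟩
  · rintro ⟨h1, h2⟩
    exact ⟨h1, fun b c h => (h2 h.symm).imp Eq.symm Eq.symm⟩

/-- The crown poset on `2 N` elements. -/
structure Crown_s4 (N : ℕ) where
  pos : ZMod N
  top : Bool

namespace Crown_s4
variable {M M' N : ℕ}

@[ext] lemma ext' {x y : Crown_s4 N} (h1 : x.pos = y.pos) (h2 : x.top = y.top) : x = y := by
  cases x; cases y; cases h1; cases h2; rfl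

instance : LE (Crown_s4 N) :=
  ⟨fun x y => x = y ∨ (x.top = false ∧ y.top = true ∧ (y.pos = x.pos ∨ y.pos = x.pos + 1))⟩

lemma le_def {x y : Crown_s4 N} : x ≤ y ↔
    (x = y ∨ (x.top = false ∧ y.top = true ∧ (y.pos = x.pos ∨ y.pos = x.pos + 1))) := Iff.rfl

instance : PartialOrder (Crown_s4 N) where
  le_refl x := Or.inl rfl
  le_trans x y z hxy hyz := by
    rcases hxy with rfl | ⟨h1, h2, h3⟩
    · exact hyz
    · rcases hyz with rfl | ⟨h1', h2', h3'⟩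
      · exact Or.inr ⟨h1, h2, h3⟩
      · rw [h2] at h1'; exact absurd h1' (by simp)
  le_antisymm x y hxy hyx := by
    rcases hxy with rfl | ⟨h1, h2, h3⟩
    · rfl
    · rcases hyx with h | ⟨h1', h2', h3'⟩
      · exact h.symm
      · rw [h2] at h1'; exact absurd h1' (by simp)

def prodEquiv : Crown_s4 N ≃ ZMod N × Bool where
  toFun x := (x.pos, x.top)
  invFun p := ⟨p.1, p.2⟩
  left_inv _ := rfl
  right_inv _ := rfl

instance [NeZero N] : Fintype (Crown_s4 N) := Fintype.ofEquiv _ prodEquiv.symm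

lemma lt_iff {x y : Crown_s4 N} : x < y ↔
    (x.top = false ∧ y.top = true ∧ (y.pos = x.pos ∨ y.pos = x.pos + 1)) := by
  constructor
  · rintro ⟨h1, h2⟩
    rcases le_def.1 h1 with rfl | h
    · exact absurd le_rfl h2
    · exact h
  · rintro ⟨h1, h2, h3⟩
    refine ⟨Or.inr ⟨h1, h2, h3⟩, fun hle => ?_⟩
    rcases le_def.1 hle with rfl | h
    · rw [h1] at h2; exact absurd h2 (by simp)
    · rw [h2] at h; exact absurd h.1 (by simp)

instance : Language.order.Structure (Crown_s4 N) := Language.orderStructure _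

instance : Language.order.OrderedStructure (Crown_s4 N) := ⟨fun _ => Iff.rfl⟩

def Sim (s : ℕ) {n : ℕ} (x : Fin n → Crown_s4 M) (y : Fin n → Crown_s4 M') : Prop :=
  (∀ i, (x i).top = (y i).top) ∧
  ∀ i j : Fin n, ∀ d : ℤ, |d| ≤ (s : ℤ) →
    (((x j).pos - (x i).pos = (d : ZMod M)) ↔ ((y j).pos - (y i).pos = (d : ZMod M')))


lemma Sim.symm {s n} {x : Fin n → Crown_s4 M} {y : Fin n → Crown_s4 M'} (h : Sim s x y) :
    Sim s y x :=
  ⟨fun i => (h.1 i).symm, fun i j d hd => (h.2 i j d hd).symm⟩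

lemma cast_small_eq_zero {N : ℕ} {d : ℤ} (hd : |d| < (N : ℤ)) :
    ((d : ZMod N) = 0) ↔ d = 0 := by
  constructor
  · intro h
    rw [ZMod.intCast_zmod_eq_zero_iff_dvd] at h
    rcases h with ⟨k, rfl⟩
    by_cases hk : k = 0
    · simp [hk]
    · exfalso
      have h1 : 1 ≤ |k| := Int.one_le_abs (by simpa using hk)
      have hN : 0 ≤ (N : ℤ) := Int.natCast_nonneg N
      have := abs_mul (N:ℤ) k
      nlinarith [abs_of_nonneg hN]
  · rintro rfl; simp only [Int.cast_zero]

lemma sim_extend [NeZero M'] {n s s' : ℕ}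
    (h1 : 1 ≤ s') (h2 : 2 * s' ≤ s)
    (hMs : 2 * s' < M) (hM's : 2 * s' < M') (hM' : (n + 1) * (2 * s' + 1) < M')
    {x : Fin n → Crown_s4 M} {y : Fin n → Crown_s4 M'} (hsim : Sim s x y) (a : Crown_s4 M) :
    ∃ b : Crown_s4 M', Sim s' (Fin.snoc x a) (Fin.snoc y b) := by
  have hss' : (s' : ℤ) ≤ (s : ℤ) := by exact_mod_cast h2.trans' (by omega)
  by_cases hc : ∃ (i : Fin n) (d : ℤ), |d| ≤ (s' : ℤ) ∧ a.pos - (x i).pos = (d : ZMod M)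
  · obtain ⟨i, d, hd, he⟩ := hc
    refine ⟨⟨(y i).pos + (d : ZMod M'), a.top⟩, ?_, ?_⟩
    · intro j
      refine Fin.lastCases ?_ (fun j => ?_) j
      · simp [Fin.snoc_last]
      · simp only [Fin.snoc_castSucc]; exact hsim.1 j
    · intro j k d' hd'
      have ha : a.pos = (x i).pos + (d : ZMod M) := by
        rw [← he]; ring
      refine Fin.lastCases ?_ (fun j => ?_) j
      · -- j = last
        refine Fin.lastCases ?_ (fun k => ?_) k
        · -- k = last : 0 = d' on both sides
          simp only [Fin.snoc_last, sub_self]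
          rw [eq_comm, eq_comm (a := (0 : ZMod M'))]
          rw [cast_small_eq_zero (lt_of_le_of_lt hd' (by exact_mod_cast (by omega : s' < M))),
            cast_small_eq_zero (lt_of_le_of_lt hd' (by exact_mod_cast (by omega : s' < M')))]
        · -- k old, j = last: (x k).pos - a.pos = d'
          simp only [Fin.snoc_last, Fin.snoc_castSucc]
          have habs : |d' + d| ≤ (s : ℤ) := by
            have := abs_add_le d' d
            have h3 : |d'| + |d| ≤ 2 * (s' : ℤ) := by omega
            omega
          have H := hsim.2 i k (d' + d) habs
          push_cast at H
          constructor
          · intro h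
            have : (x k).pos - (x i).pos = (d' : ZMod M) + (d : ZMod M) := by
              rw [ha] at h; linear_combination h
            have := H.mp (by linear_combination this)
            rw [show ((y k).pos - (y i).pos) = ((y k).pos - ((y i).pos + (d : ZMod M'))) + d by ring] at this
            linear_combination this
          · intro h
            have : (y k).pos - (y i).pos = (d' : ZMod M') + (d : ZMod M') := by
              linear_combination h
            have := H.mpr (by linear_combination this)
            rw [ha]; linear_combination this
      · refine Fin.lastCases ?_ (fun k => ?_) k
        · -- j old, k = last : a.pos - (x j).pos = d'
          simp only [Fin.snoc_last, Fin.snoc_castSucc]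
          have habs : |d' - d| ≤ (s : ℤ) := by
            have := abs_sub d' d
            have h3 : |d'| + |d| ≤ 2 * (s' : ℤ) := by omega
            have := abs_sub_abs_le_abs_sub d' d
            have := abs_sub_comm d' d
            have := abs_add_le d' (-d)
            simp only [abs_neg] at this
            rw [show d' - d = d' + -d by ring]
            omega
          have H := hsim.2 j i (d' - d) habs
          push_cast at H
          constructor
          · intro h
            have : (x i).pos - (x j).pos = (d' : ZMod M) - (d : ZMod M) := by
              rw [ha] at h; linear_combination h
            have := H.mp (by linear_combination this)
            linear_combination this
          · intro h
            have : (y i).pos - (y j).pos = (d' : ZMod M') - (d : ZMod M') := by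
              linear_combination h
            have := H.mpr (by linear_combination this)
            rw [ha]; linear_combination this
        · simp only [Fin.snoc_castSucc]
          exact hsim.2 j k d' (hd'.trans hss')
  · push_neg at hc
    -- find a far position in ZMod M'
    classical
    set Bad : Finset (ZMod M') :=
      Finset.univ.biUnion
        (fun i : Fin n => Finset.image
          (fun d : ℤ => (y i).pos + (d : ZMod M')) (Finset.Icc (-(s' : ℤ)) (s' : ℤ))) with hBad
    have hcard : Bad.card < Fintype.card (ZMod M') := by
      rw [ZMod.card]
      calc Bad.card ≤ ∑ i : Fin n, (Finset.image
          (fun d : ℤ => (y i).pos + (d : ZMod M')) (Finset.Icc (-(s' : ℤ)) (s' : ℤ))).card :=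
            Finset.card_biUnion_le
        _ ≤ ∑ _i : Fin n, (2 * s' + 1) := by
            refine Finset.sum_le_sum fun i _ => ?_
            refine (Finset.card_image_le).trans ?_
            rw [Int.card_Icc]
            omega
        _ = n * (2 * s' + 1) := by simp [Finset.sum_const, mul_comm]
        _ < M' := by nlinarith
    obtain ⟨p, hp⟩ : ∃ p : ZMod M', p ∉ Bad := by
      by_contra h
      push_neg at h
      have : (Finset.univ : Finset (ZMod M')) ⊆ Bad := fun z _ => h z
      have := Finset.card_le_card this
      rw [Finset.card_univ] at this
      omega
    have hpfar : ∀ (i : Fin n) (d : ℤ), |d| ≤ (s' : ℤ) → p - (y i).pos ≠ (d : ZMod M') := by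
      intro i d hd h
      apply hp
      rw [hBad]
      refine Finset.mem_biUnion.2 ⟨i, Finset.mem_univ _, Finset.mem_image.2 ⟨d, ?_, ?_⟩⟩
      · rw [Finset.mem_Icc]; exact abs_le.mp hd
      · linear_combination -h
    refine ⟨⟨p, a.top⟩, ?_, ?_⟩
    · intro j
      refine Fin.lastCases ?_ (fun j => ?_) j
      · simp [Fin.snoc_last]
      · simp only [Fin.snoc_castSucc]; exact hsim.1 j
    · intro j k d' hd'
      refine Fin.lastCases ?_ (fun j => ?_) j
      · refine Fin.lastCases ?_ (fun k => ?_) k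
        · simp only [Fin.snoc_last, sub_self]
          rw [eq_comm, eq_comm (a := (0 : ZMod M'))]
          rw [cast_small_eq_zero (lt_of_le_of_lt hd' (by exact_mod_cast (by omega : s' < M))),
            cast_small_eq_zero (lt_of_le_of_lt hd' (by exact_mod_cast (by omega : s' < M')))]
        · -- k old, j = last : (x k).pos - a.pos = d'
          simp only [Fin.snoc_last, Fin.snoc_castSucc]
          constructor
          · intro h
            exfalso
            apply hc k (-d') (by rw [abs_neg]; exact hd')
            push_cast
            linear_combination -h
          · intro h
            exfalso
            apply hpfar k (-d') (by rw [abs_neg]; exact hd')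
            push_cast
            linear_combination -h
      · refine Fin.lastCases ?_ (fun k => ?_) k
        · simp only [Fin.snoc_last, Fin.snoc_castSucc]
          constructor
          · intro h
            exact absurd h (hc j d' hd')
          · intro h
            exact absurd h (hpfar j d' hd')
        · simp only [Fin.snoc_castSucc]
          exact hsim.2 j k d' (hd'.trans hss')

/-- transfer of equality between similar tuples -/
lemma Sim.eq_iff {s n} {x : Fin n → Crown_s4 M} {y : Fin n → Crown_s4 M'} (h : Sim s x y)
    (i j : Fin n) : x i = x j ↔ y i = y j := by
  have h0 := h.2 i j 0 (by simp)
  push_cast at h0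
  constructor
  · rintro he
    ext
    · have : (x j).pos - (x i).pos = 0 := by rw [he]; ring
      have := h0.mp this
      linear_combination -this
    · rw [← h.1 i, ← h.1 j, he]
  · rintro he
    ext
    · have : (y j).pos - (y i).pos = 0 := by rw [he]; ring
      have := h0.mpr this
      linear_combination -this
    · rw [h.1 i, h.1 j, he]

/-- transfer of order between similar tuples -/
lemma Sim.le_iff {s n} {x : Fin n → Crown_s4 M} {y : Fin n → Crown_s4 M'} (h : Sim s x y)
    (hs : 1 ≤ s) (i j : Fin n) : x i ≤ x j ↔ y i ≤ y j := by
  have h0 := h.2 i j 0 (by simp)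
  have h1 := h.2 i j 1 (by simpa using by exact_mod_cast hs)
  push_cast at h0 h1
  rw [le_def, le_def]
  constructor
  · rintro (he | ⟨ht1, ht2, hp | hp⟩)
    · exact Or.inl ((h.eq_iff i j).mp he)
    · refine Or.inr ⟨(h.1 i) ▸ ht1, (h.1 j) ▸ ht2, Or.inl ?_⟩
      have := h0.mp (by rw [hp]; ring)
      linear_combination this
    · refine Or.inr ⟨(h.1 i) ▸ ht1, (h.1 j) ▸ ht2, Or.inr ?_⟩
      have := h1.mp (by rw [hp]; ring)
      linear_combination this
  · rintro (he | ⟨ht1, ht2, hp | hp⟩)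
    · exact Or.inl ((h.eq_iff i j).mpr he)
    · refine Or.inr ⟨(h.1 i).symm ▸ ht1, (h.1 j).symm ▸ ht2, Or.inl ?_⟩
      have := h0.mpr (by rw [hp]; ring)
      linear_combination this
    · refine Or.inr ⟨(h.1 i).symm ▸ ht1, (h.1 j).symm ▸ ht2, Or.inr ?_⟩
      have := h1.mpr (by rw [hp]; ring)
      linear_combination this

end Crown_s4

open Crown_s4 in
/-- quantifier depth -/
def qd : ∀ {n : ℕ}, Language.order.BoundedFormula Empty n → ℕ
  | _, .falsum => 0
  | _, .equal _ _ => 0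
  | _, .rel _ _ => 0
  | _, .imp f g => max (qd f) (qd g)
  | _, .all f => qd f + 1

lemma term_eq_var {β : Type*} (t : Language.order.Term β) : ∃ v, t = Language.Term.var v := by
  cases t with
  | var v => exact ⟨v, rfl⟩
  | func f ts => exact isEmptyElim f

open Crown_s4 in
theorem crown_ef {M M' : ℕ} [NeZero M] [NeZero M'] :
    ∀ {n : ℕ} (φ : Language.order.BoundedFormula Empty n) (s : ℕ),
    2 ^ (qd φ) ≤ s → (n + 2) * (2 * s + 1) ≤ M → (n + 2) * (2 * s + 1) ≤ M' →
    ∀ (v : Empty → Crown_s4 M) (v' : Empty → Crown_s4 M')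
      (x : Fin n → Crown_s4 M) (y : Fin n → Crown_s4 M'),
      Sim s x y → (φ.Realize v x ↔ φ.Realize v' y) := by
  intro n φ
  induction φ with
  | falsum => exact fun _ _ _ _ _ _ _ _ _ => Iff.rfl
  | @equal m t₁ t₂ =>
    intro s hq hM hM' v v' x y hsim
    obtain ⟨w₁, rfl⟩ := term_eq_var t₁
    obtain ⟨w₂, rfl⟩ := term_eq_var t₂
    rcases w₁ with e | i; · exact e.elim
    rcases w₂ with e | j; · exact e.elim
    simp only [FirstOrder.Language.BoundedFormula.Realize, Language.Term.realize, Sum.elim_inr]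
    exact hsim.eq_iff i j
  | @rel m l R ts =>
    intro s hq hM hM' v v' x y hsim
    have hs1 : 1 ≤ s := le_trans (Nat.one_le_two_pow) hq
    cases R
    obtain ⟨w₁, h₁⟩ := term_eq_var (ts 0)
    obtain ⟨w₂, h₂⟩ := term_eq_var (ts 1)
    rcases w₁ with e | i; · exact e.elim
    rcases w₂ with e | j; · exact e.elim
    have hts : ts = ![Language.Term.var (Sum.inr i), Language.Term.var (Sum.inr j)] := by
      funext k
      fin_cases k
      · exact h₁
      · exact h₂
    subst hts
    simp only [FirstOrder.Language.BoundedFormula.Realize]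
    show (x i ≤ x j) ↔ (y i ≤ y j)
    exact hsim.le_iff hs1 i j
  | @imp m f g ihf ihg =>
    intro s hq hM hM' v v' x y hsim
    have hqf : 2 ^ qd f ≤ s :=
      le_trans (Nat.pow_le_pow_right (by norm_num) (le_max_left _ _)) hq
    have hqg : 2 ^ qd g ≤ s :=
      le_trans (Nat.pow_le_pow_right (by norm_num) (le_max_right _ _)) hq
    simp only [Language.BoundedFormula.realize_imp]
    rw [ihf s hqf hM hM' v v' x y hsim, ihg s hqg hM hM' v v' x y hsim]
  | @all m f ihf =>
    intro s hq hM hM' v v' x y hsim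
    set s' := 2 ^ qd f with hs'
    have hq' : 2 ^ (qd f + 1) ≤ s := hq
    have h1 : 1 ≤ s' := Nat.one_le_two_pow
    have h2 : 2 * s' ≤ s := by
      rw [hs']
      calc 2 * 2 ^ qd f = 2 ^ (qd f + 1) := by ring
        _ ≤ s := hq'
    have hMc : (m + 1 + 2) * (2 * s' + 1) ≤ M := le_trans (by nlinarith) hM
    have hM'c : (m + 1 + 2) * (2 * s' + 1) ≤ M' := le_trans (by nlinarith) hM'
    have hMs : 2 * s' < M := lt_of_lt_of_le (by nlinarith) hM
    have hM's : 2 * s' < M' := lt_of_lt_of_le (by nlinarith) hM'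
    have hMlt : (m + 1) * (2 * s' + 1) < M := lt_of_lt_of_le (by nlinarith) hM
    have hM'lt : (m + 1) * (2 * s' + 1) < M' := lt_of_lt_of_le (by nlinarith) hM'
    simp only [Language.BoundedFormula.realize_all]
    constructor
    · intro h b
      obtain ⟨a, hsim'⟩ := sim_extend h1 h2 hM's hMs hMlt hsim.symm b
      exact (ihf s' le_rfl hMc hM'c v v' _ _ hsim'.symm).mp (h a)
    · intro h a
      obtain ⟨b, hsim'⟩ := sim_extend h1 h2 hMs hM's hM'lt hsim a
      exact (ihf s' le_rfl hMc hM'c v v' _ _ hsim').mpr (h b)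

section LatticeSide

variable {N : ℕ} [NeZero N]

instance : Finite (LowerSet (Crown_s4 N)) :=
  Finite.of_injective (SetLike.coe : LowerSet (Crown_s4 N) → Set (Crown_s4 N)) SetLike.coe_injective

lemma joinIrred_lowerSet_iff {s : LowerSet (Crown_s4 N)} :
    JoinIrred s ↔ ∃ p, s = LowerSet.Iic p := by
  rw [joinIrred_iff_supIrred, LowerSet.supIrred_iff_of_finite]
  exact ⟨fun ⟨a, h⟩ => ⟨a, h.symm⟩, fun ⟨a, h⟩ => ⟨a, h.symm⟩⟩

/-- the map n ↦ the maximal join-irreducible `Iic ⟨i, true⟩` -/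
def A (i : ZMod N) : LowerSet (Crown_s4 N) := LowerSet.Iic ⟨i, true⟩

lemma A_injective : Function.Injective (A (N := N)) := by
  intro i j h
  have := LowerSet.Iic_inj.mp h
  exact congrArg Crown_s4.pos this

lemma ji_A (i : ZMod N) : JoinIrred (A i) := joinIrred_lowerSet_iff.mpr ⟨_, rfl⟩

lemma mem_maxJI_iff {x : LowerSet (Crown_s4 N)} :
    x ∈ maxJI (LowerSet (Crown_s4 N)) ↔ ∃ i, x = A i := by
  constructor
  · rintro ⟨hji, hmax⟩
    obtain ⟨p, rfl⟩ := joinIrred_lowerSet_iff.mp hji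
    refine ⟨p.pos, ?_⟩
    have hle : LowerSet.Iic p ≤ A p.pos := by
      rw [LowerSet.Iic_le]
      exact LowerSet.mem_Iic_iff.mpr (by
        rcases h : p.top with _ | _
        · exact Or.inr ⟨h, rfl, Or.inl rfl⟩
        · exact Or.inl (Crown_s4.ext' rfl h))
    exact hmax _ (ji_A p.pos) hle
  · rintro ⟨i, rfl⟩
    refine ⟨ji_A i, fun b hb hle => ?_⟩
    obtain ⟨q, rfl⟩ := joinIrred_lowerSet_iff.mp hb
    have hpq : (⟨i, true⟩ : Crown_s4 N) ≤ q := by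
      have := LowerSet.Iic_le.mp hle
      exact LowerSet.mem_Iic_iff.mp this
    rcases Crown_s4.le_def.mp hpq with h | ⟨h1, _, _⟩
    · exact congrArg LowerSet.Iic h
    · exact absurd h1 (by simp)

lemma iic_lt_iic_iff {u v : Crown_s4 N} : LowerSet.Iic u < LowerSet.Iic v ↔ u < v := by
  rw [lt_iff_le_and_ne, lt_iff_le_and_ne]
  constructor
  · rintro ⟨h1, h2⟩
    refine ⟨LowerSet.mem_Iic_iff.mp (LowerSet.Iic_le.mp h1), fun h => h2 (by rw [h])⟩
  · rintro ⟨h1, h2⟩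
    exact ⟨LowerSet.Iic_le.mpr (LowerSet.mem_Iic_iff.mpr h1),
      fun h => h2 (LowerSet.Iic_inj.mp h)⟩

lemma jcovby_iic_iff {u v : Crown_s4 N} :
    JCovBy (LowerSet.Iic u) (LowerSet.Iic v) ↔ u < v := by
  constructor
  · rintro ⟨_, _, hlt, _⟩
    exact iic_lt_iic_iff.mp hlt
  · intro huv
    refine ⟨joinIrred_lowerSet_iff.mpr ⟨_, rfl⟩, joinIrred_lowerSet_iff.mpr ⟨_, rfl⟩,
      iic_lt_iic_iff.mpr huv, fun d hd h1 h2 => ?_⟩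
    obtain ⟨w, rfl⟩ := joinIrred_lowerSet_iff.mp hd
    have huw := iic_lt_iic_iff.mp h1
    have hwv := iic_lt_iic_iff.mp h2
    rw [Crown_s4.lt_iff] at huw hwv
    rw [huw.2.1] at hwv
    exact absurd hwv.1 (by simp)

lemma common_cover_iff {i j : ZMod N} (hij : i ≠ j) :
    (∃ c, JCovBy c (A i) ∧ JCovBy c (A j)) ↔ (j = i + 1 ∨ i = j + 1) := by
  constructor
  · rintro ⟨c, hci, hcj⟩
    obtain ⟨u, rfl⟩ := joinIrred_lowerSet_iff.mp hci.1
    have h1 := Crown_s4.lt_iff.mp (iic_lt_iic_iff.mp hci.2.2.1)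
    have h2 := Crown_s4.lt_iff.mp (iic_lt_iic_iff.mp hcj.2.2.1)
    rcases h1.2.2 with ha | ha <;> rcases h2.2.2 with hb | hb <;> dsimp only at ha hb
    · exact absurd (ha.trans hb.symm) hij
    · exact Or.inl (by rw [hb, ← ha])
    · exact Or.inr (by rw [ha, ← hb])
    · exact absurd (ha.trans hb.symm) hij
  · intro h
    rcases h with h | h
    · refine ⟨LowerSet.Iic ⟨i, false⟩, jcovby_iic_iff.mpr ?_, jcovby_iic_iff.mpr ?_⟩
      · exact Crown_s4.lt_iff.mpr ⟨rfl, rfl, Or.inl rfl⟩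
      · exact Crown_s4.lt_iff.mpr ⟨rfl, rfl, Or.inr (by rw [h])⟩
    · refine ⟨LowerSet.Iic ⟨j, false⟩, jcovby_iic_iff.mpr ?_, jcovby_iic_iff.mpr ?_⟩
      · exact Crown_s4.lt_iff.mpr ⟨rfl, rfl, Or.inr (by rw [h])⟩
      · exact Crown_s4.lt_iff.mpr ⟨rfl, rfl, Or.inl rfl⟩

end LatticeSide

section BME

variable {N : ℕ} [NeZero N]

lemma one_ne_zero_zmod (hN : 3 ≤ N) : (1 : ZMod N) ≠ 0 := by
  intro h
  have : ((1 : ℕ) : ZMod N) = 0 := by push_cast; exact h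
  rw [ZMod.natCast_eq_zero_iff] at this
  exact absurd (Nat.le_of_dvd one_pos this) (by omega)

lemma ne_add_one_zmod (hN : 3 ≤ N) (i : ZMod N) : i ≠ i + 1 := by
  intro h
  exact one_ne_zero_zmod hN (by linear_combination -h)

lemma zmod2_cases (z : ZMod 2) : z = 0 ∨ z = 1 := by revert z; decide

lemma bme_even (hN : 3 ≤ N) (hEven : Even N) :
    BipartiteMaxElements (LowerSet (Crown_s4 N)) := by
  have h2 : 2 ∣ N := hEven.two_dvd
  set g : ZMod N →+* ZMod 2 := ZMod.castHom h2 (ZMod 2) with hg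
  refine ⟨{x | ∃ i, g i = 0 ∧ x = A i}, {x | ∃ i, g i = 1 ∧ x = A i},
    ⟨A 0, 0, map_zero g, rfl⟩, ⟨A 1, 1, map_one g, rfl⟩, ?_, ?_, ?_, ?_⟩
  · rw [Set.disjoint_left]
    rintro x ⟨i, hi, rfl⟩ ⟨j, hj, hx⟩
    rw [A_injective hx] at hi
    rw [hi] at hj
    exact absurd hj (by decide)
  · ext x
    constructor
    · rintro (⟨i, _, rfl⟩ | ⟨i, _, rfl⟩) <;> exact mem_maxJI_iff.mpr ⟨i, rfl⟩
    · intro hx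
      obtain ⟨i, rfl⟩ := mem_maxJI_iff.mp hx
      rcases zmod2_cases (g i) with h | h
      · exact Or.inl ⟨i, h, rfl⟩
      · exact Or.inr ⟨i, h, rfl⟩
  · rintro a ⟨i, hi, rfl⟩ b ⟨j, hj, rfl⟩ hab ⟨c, hc⟩
    have hij : i ≠ j := fun h => hab (congrArg A h)
    rcases (common_cover_iff hij).mp ⟨c, hc⟩ with h | h
    · rw [h, map_add, map_one, hi] at hj
      exact absurd hj (by decide)
    · rw [h, map_add, map_one, hj] at hi
      exact absurd hi (by decide)
  · rintro a ⟨i, hi, rfl⟩ b ⟨j, hj, rfl⟩ hab ⟨c, hc⟩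
    have hij : i ≠ j := fun h => hab (congrArg A h)
    rcases (common_cover_iff hij).mp ⟨c, hc⟩ with h | h
    · rw [h, map_add, map_one, hi] at hj
      exact absurd hj (by decide)
    · rw [h, map_add, map_one, hj] at hi
      exact absurd hi (by decide)

lemma bme_odd (hN : 3 ≤ N) (h : BipartiteMaxElements (LowerSet (Crown_s4 N))) : Even N := by
  obtain ⟨𝒜, ℬ, hAne, hBne, hdisj, huni, hA, hB⟩ := h
  have hmem : ∀ i : ZMod N, A i ∈ 𝒜 ∪ ℬ := by
    intro i
    rw [huni]
    exact mem_maxJI_iff.mpr ⟨i, rfl⟩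
  have hAnei : ∀ i : ZMod N, A i ≠ A (i + 1) :=
    fun i h => ne_add_one_zmod hN i (A_injective h)
  have hcc : ∀ i : ZMod N, ∃ c, JCovBy c (A i) ∧ JCovBy c (A (i + 1)) :=
    fun i => (common_cover_iff (ne_add_one_zmod hN i)).mpr (Or.inl rfl)
  have key : ∀ i : ZMod N, (A (i + 1) ∈ 𝒜 ↔ A i ∉ 𝒜) := by
    intro i
    have hnAA : ¬(A i ∈ 𝒜 ∧ A (i + 1) ∈ 𝒜) :=
      fun ⟨h1, h2⟩ => hA _ h1 _ h2 (hAnei i) (hcc i)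
    have hnBB : ¬(A i ∈ ℬ ∧ A (i + 1) ∈ ℬ) :=
      fun ⟨h1, h2⟩ => hB _ h1 _ h2 (hAnei i) (hcc i)
    have h1 := hmem i
    have h2 := hmem (i + 1)
    have hd1 : A i ∈ 𝒜 → A i ∉ ℬ := fun hh => Set.disjoint_left.mp hdisj hh
    have hd2 : A (i + 1) ∈ 𝒜 → A (i + 1) ∉ ℬ := fun hh => Set.disjoint_left.mp hdisj hh
    rcases h1 with h1 | h1 <;> rcases h2 with h2 | h2 <;> tauto
  have alt : ∀ k : ℕ, (A ((k : ℕ) : ZMod N) ∈ 𝒜 ↔ (Even k ↔ A 0 ∈ 𝒜)) := by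
    intro k
    induction k with
    | zero => simp only [Nat.cast_zero, Nat.even_iff]; tauto
    | succ k ih =>
      have hc : ((k + 1 : ℕ) : ZMod N) = ((k : ℕ) : ZMod N) + 1 := by push_cast; ring
      rw [hc, key, ih, Nat.even_add_one]
      tauto
  have := alt N
  rw [ZMod.natCast_self] at this
  tauto

end BME

section Glue

variable (N : ℕ) [NeZero N]

noncomputable def jIso :
    {x : LowerSet (Crown_s4 N) // JoinIrred x} ≃o Crown_s4 N :=
  (OrderIso.trans
    { toEquiv := Equiv.subtypeEquivRight (fun _ => joinIrred_iff_supIrred)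
      map_rel_iff' := Iff.rfl }
    OrderIso.supIrredLowerSet.symm)

lemma sentence_transfer (φ : Language.order.Sentence) :
    (@Language.Sentence.Realize Language.order {x : LowerSet (Crown_s4 N) // JoinIrred x}
      (Language.orderStructure {x : LowerSet (Crown_s4 N) // JoinIrred x}) φ) ↔
      (Crown_s4 N) ⊨ φ := by
  letI : Language.order.Structure {x : LowerSet (Crown_s4 N) // JoinIrred x} :=
    Language.orderStructure _
  haveI : Language.order.OrderedStructure {x : LowerSet (Crown_s4 N) // JoinIrred x} :=
    ⟨fun _ => Iff.rfl⟩
  exact Language.StrongHomClass.realize_sentence (jIso N) φ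

end Glue

end NotExpressibleAux

/-- There is no first-order sentence in the language with a single binary relation symbol
`≤` that is satisfied by the poset of join-irreducible elements of a finite distributive
lattice `D` exactly when `D` satisfies the Bipartite Maximal Elements Property. -/
theorem bipartiteMaxElements_not_expressible_in_joinIrred_poset :
    ¬∃ φ : Language.order.Sentence,
      ∀ (D : Type) [DistribLattice D] [OrderBot D] [Fintype D],
        (@FirstOrder.Language.Sentence.Realize Language.order {x : D // JoinIrred x}
            (Language.orderStructure {x : D // JoinIrred x}) φ ↔
          BipartiteMaxElements D) := by
  rintro ⟨φ, hφ⟩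
  set s := 2 ^ qd φ with hs
  set M := 8 * s + 4 with hM
  have hspos : 1 ≤ s := Nat.one_le_two_pow
  haveI : NeZero M := ⟨by omega⟩
  haveI : NeZero (M + 1) := ⟨by omega⟩
  have hb1 : (0 + 2) * (2 * s + 1) ≤ M := by omega
  have hb2 : (0 + 2) * (2 * s + 1) ≤ M + 1 := by omega
  have sent : (Crown_s4 M) ⊨ φ ↔ (Crown_s4 (M + 1)) ⊨ φ :=
    crown_ef φ s le_rfl hb1 hb2 default default default default
      ⟨fun i => i.elim0, fun i j => i.elim0⟩
  have hev : BipartiteMaxElements (LowerSet (Crown_s4 M)) :=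
    bme_even (by omega) ⟨4 * s + 2, by ring⟩
  have hodd : ¬BipartiteMaxElements (LowerSet (Crown_s4 (M + 1))) := by
    intro h
    have := bme_odd (by omega) h
    rw [Nat.even_iff] at this
    omega
  have h1 := @hφ (LowerSet (Crown_s4 M)) inferInstance inferInstance (Fintype.ofFinite _)
  have h2 := @hφ (LowerSet (Crown_s4 (M + 1))) inferInstance inferInstance (Fintype.ofFinite _)
  rw [sentence_transfer] at h1 h2
  exact hodd (h2.mp (sent.mp (h1.mpr hev)))
end

section
/- Let D be a finite distributive lattice and let n ≥ 3. If the n-crown K_n is an induced subposet of the poset J(D) of join-irreducible elements of D, then D has at least 18 elements. -/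
/-- The underlying set of the `n`-crown `K_n`: `Sum.inl j` is the maximal element `a j` and
`Sum.inr i` is the minimal element `b i`. -/
structure Crown (n : ℕ) where
  toSum : Fin n ⊕ Fin n

/-- The order of the `n`-crown: `b i ≤ a j` iff `i = j` or `i + 1 ≡ j (mod n)`; these,
together with reflexivity, are the only comparabilities. -/
instance (n : ℕ) : PartialOrder (Crown n) where
  le x y := x = y ∨ ∃ i j : Fin n, x.toSum = Sum.inr i ∧ y.toSum = Sum.inl j ∧
    ((j : ℕ) = (i : ℕ) ∨ (j : ℕ) = ((i : ℕ) + 1) % n)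
  le_refl x := Or.inl rfl
  le_trans x y z hxy hyz := by
    rcases hxy with rfl | ⟨i, j, hx, hy, hij⟩
    · exact hyz
    · rcases hyz with rfl | ⟨i', j', hy', _, _⟩
      · exact Or.inr ⟨i, j, hx, hy, hij⟩
      · rw [hy] at hy'; exact absurd hy' (by simp)
  le_antisymm x y hxy hyx := by
    rcases hxy with rfl | ⟨i, j, hx, hy, _⟩
    · rfl
    · rcases hyx with h | ⟨i', j', hy', hx', _⟩
      · exact h.symm
      · rw [hx] at hx'; exact absurd hx' (by simp)


namespace CrownAux

variable {n : ℕ}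

instance : DecidableEq (Crown n) := fun a b =>
  decidable_of_iff (a.toSum = b.toSum) (by cases a; cases b; simp)

/-- The maximal element `a j` of the crown. -/
def cA (n : ℕ) (j : Fin n) : Crown n := ⟨Sum.inl j⟩

/-- The minimal element `b i` of the crown. -/
def cB (n : ℕ) (i : Fin n) : Crown n := ⟨Sum.inr i⟩

@[simp] lemma cA_inj {j k : Fin n} : cA n j = cA n k ↔ j = k := by
  unfold cA; constructor
  · intro h; injection h with h'; simpa using h'
  · rintro rfl; rfl

@[simp] lemma cB_inj {j k : Fin n} : cB n j = cB n k ↔ j = k := by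
  unfold cB; constructor
  · intro h; injection h with h'; simpa using h'
  · rintro rfl; rfl

@[simp] lemma cA_ne_cB {j i : Fin n} : cA n j ≠ cB n i := by
  unfold cA cB; intro h; injection h with h'; simp at h'

@[simp] lemma cB_ne_cA {j i : Fin n} : cB n i ≠ cA n j := fun h => cA_ne_cB h.symm

lemma le_cB {x : Crown n} {i : Fin n} (h : x ≤ cB n i) : x = cB n i := by
  rcases h with h | ⟨i', j', _, hy, _⟩
  · exact h
  · exact absurd hy (by simp [cB])

lemma le_cA {x : Crown n} {j : Fin n} (h : x ≤ cA n j) :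
    x = cA n j ∨ ∃ i : Fin n, x = cB n i ∧ ((j : ℕ) = (i : ℕ) ∨ (j : ℕ) = ((i : ℕ) + 1) % n) := by
  rcases h with h | ⟨i', j', hx, hy, hij⟩
  · exact Or.inl h
  · refine Or.inr ⟨i', ?_, ?_⟩
    · cases x; simp [cB] at hx ⊢; exact hx
    · have hj : j = j' := by simpa [cA] using hy
      subst hj; exact hij

lemma succ_mod_eq_iff (i : Fin n) (k : ℕ) (hk : k < n) :
    ((i : ℕ) + 1) % n = k ↔ ((i : ℕ) + 1 = k ∨ ((i : ℕ) = n - 1 ∧ k = 0)) := by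
  have hi := i.isLt
  rcases Nat.lt_or_ge ((i : ℕ) + 1) n with h' | h'
  · rw [Nat.mod_eq_of_lt h']; omega
  · have h2 : (i : ℕ) + 1 = n := by omega
    rw [h2, Nat.mod_self]; omega

lemma below_cA {j : Fin n} {q : Crown n} (hq : q ≤ cA n j) :
    q = cA n j ∨ ∃ i : Fin n, q = cB n i ∧
      ((i : ℕ) = (j : ℕ) ∨ (i : ℕ) + 1 = (j : ℕ) ∨ ((i : ℕ) = n - 1 ∧ (j : ℕ) = 0)) := by
  rcases le_cA hq with h | ⟨i, rfl, hij⟩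
  · exact Or.inl h
  · refine Or.inr ⟨i, rfl, ?_⟩
    rcases hij with h | h
    · exact Or.inl h.symm
    · rcases (succ_mod_eq_iff i (j : ℕ) j.isLt).mp h.symm with h' | h'
      · exact Or.inr (Or.inl h')
      · exact Or.inr (Or.inr h')

/-- Down-closed finsets in the crown. -/
def IsDownClosed (S : Finset (Crown n)) : Prop :=
  ∀ p ∈ S, ∀ q : Crown n, q ≤ p → q ∈ S

lemma DC_of (S : Finset (Crown n))
    (hsub : ∀ p ∈ S, (∃ j : Fin n, p = cA n j) ∨ ∃ i : Fin n, p = cB n i)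
    (hA : ∀ j : Fin n, cA n j ∈ S → ∀ i : Fin n,
      ((i : ℕ) = (j : ℕ) ∨ (i : ℕ) + 1 = (j : ℕ) ∨ ((i : ℕ) = n - 1 ∧ (j : ℕ) = 0)) →
      cB n i ∈ S) :
    IsDownClosed S := by
  intro p hp q hq
  rcases hsub p hp with ⟨j, rfl⟩ | ⟨i, rfl⟩
  · rcases below_cA hq with rfl | ⟨i, rfl, hc⟩
    · exact hp
    · exact hA j hp i hc
  · rw [le_cB hq]; exact hp

lemma joinIrred_supPrime {D : Type*} [DistribLattice D] [OrderBot D] {x : D}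
    (h : JoinIrred x) : SupPrime x :=
  SupIrred.supPrime ⟨fun hm => h.1 hm.eq_bot, fun b c hbc => by
    rcases h.2 b c hbc.symm with h' | h'
    · exact Or.inl h'.symm
    · exact Or.inr h'.symm⟩

end CrownAux

set_option maxHeartbeats 1000000 in
/-- If for some `n ≥ 3` the `n`-crown is an induced subposet (i.e. the image of an order
embedding) of the poset of join-irreducible elements of a finite distributive lattice `D`,
then `D` has at least 18 elements. -/
theorem card_ge_18_of_crown_in_joinIrred_poset
    (D : Type*) [DistribLattice D] [OrderBot D] [Fintype D]
    (n : ℕ) (hn : 3 ≤ n)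
    (h : Nonempty (Crown n ↪o {x : D // JoinIrred x})) :
    18 ≤ Fintype.card D := by
  classical
  obtain ⟨e⟩ := h
  set g : Crown n → D := fun q => ((e q : {x : D // JoinIrred x}) : D) with hg
  have hgle : ∀ {p q : Crown n}, g p ≤ g q ↔ p ≤ q := by
    intro p q
    have : g p ≤ g q ↔ e p ≤ e q := Subtype.coe_le_coe
    rw [this, e.le_iff_le]
  have hprime : ∀ q : Crown n, SupPrime (g q) := fun q => CrownAux.joinIrred_supPrime (e q).2
  have hkey : ∀ (q : Crown n) (S : Finset (Crown n)), g q ≤ S.sup g ↔ ∃ t ∈ S, q ≤ t := by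
    intro q S
    rw [(hprime q).le_finset_sup]
    exact exists_congr fun t => and_congr_right fun _ => hgle
  have hsupinj : ∀ S T : Finset (Crown n), CrownAux.IsDownClosed S → CrownAux.IsDownClosed T →
      S.sup g = T.sup g → S = T := by
    intro S T hS hT hST
    apply Finset.ext; intro p
    constructor
    · intro hp
      obtain ⟨t, ht, hpt⟩ := (hkey p T).mp (hST ▸ Finset.le_sup (f := g) hp)
      exact hT t ht p hpt
    · intro hp
      obtain ⟨t, ht, hpt⟩ := (hkey p S).mp (hST.symm ▸ Finset.le_sup (f := g) hp)
      exact hS t ht p hpt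
  obtain ⟨i0, hi0⟩ : ∃ i0 : Fin n, i0 = ⟨0, by omega⟩ := ⟨_, rfl⟩
  obtain ⟨i1, hi1⟩ : ∃ i1 : Fin n, i1 = ⟨1, by omega⟩ := ⟨_, rfl⟩
  obtain ⟨i2, hi2⟩ : ∃ i2 : Fin n, i2 = ⟨2, by omega⟩ := ⟨_, rfl⟩
  obtain ⟨iN, hiN⟩ : ∃ iN : Fin n, iN = ⟨n - 1, by omega⟩ := ⟨_, rfl⟩
  obtain ⟨a0, ha0⟩ : ∃ a0 : Crown n, a0 = CrownAux.cA n i0 := ⟨_, rfl⟩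
  obtain ⟨a1, ha1⟩ : ∃ a1 : Crown n, a1 = CrownAux.cA n i1 := ⟨_, rfl⟩
  obtain ⟨a2, ha2⟩ : ∃ a2 : Crown n, a2 = CrownAux.cA n i2 := ⟨_, rfl⟩
  obtain ⟨b0, hb0⟩ : ∃ b0 : Crown n, b0 = CrownAux.cB n i0 := ⟨_, rfl⟩
  obtain ⟨b1, hb1⟩ : ∃ b1 : Crown n, b1 = CrownAux.cB n i1 := ⟨_, rfl⟩
  obtain ⟨b2, hb2⟩ : ∃ b2 : Crown n, b2 = CrownAux.cB n i2 := ⟨_, rfl⟩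
  obtain ⟨bN, hbN⟩ : ∃ bN : Crown n, bN = CrownAux.cB n iN := ⟨_, rfl⟩
  obtain ⟨Ts, hTs⟩ : ∃ Ts : Fin 18 → Finset (Crown n), Ts =
    ![∅, {b0}, {b1}, {b2}, {b0, b1}, {b0, b2}, {b1, b2}, {b0, b1, b2},
      {a1, b0, b1}, {a1, b0, b1, b2}, {a2, b1, b2}, {a2, b0, b1, b2},
      {a1, a2, b0, b1, b2}, {a0, bN, b0}, {a0, bN, b0, b1},
      {a0, a1, bN, b0, b1}, {a0, a2, bN, b0, b1, b2},
      {a0, a1, a2, bN, b0, b1, b2}] := ⟨_, rfl⟩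
  have hd0 : CrownAux.IsDownClosed (∅ : Finset (Crown n)) := by
    refine CrownAux.DC_of _ ?_ ?_
    · intro p hp
      exact absurd hp (Finset.notMem_empty p)
    · intro j hj i hi
      simp only [Finset.mem_insert, Finset.mem_singleton, Finset.notMem_empty,
        ha0, ha1, ha2, hb0, hb1, hb2, hbN, CrownAux.cA_inj, CrownAux.cB_inj, CrownAux.cA_ne_cB,
        CrownAux.cB_ne_cA, Fin.ext_iff, Fin.val_mk, hi0, hi1, hi2, hiN, or_self, or_false, false_or, or_true, true_or,
        and_false, false_and, and_true, true_and] at hj hi ⊢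
      try omega
  have hd1 : CrownAux.IsDownClosed ({b0} : Finset (Crown n)) := by
    refine CrownAux.DC_of _ ?_ ?_
    · intro p hp
      simp only [Finset.mem_insert, Finset.mem_singleton] at hp
      rcases hp with rfl
      · exact Or.inr ⟨_, hb0⟩
    · intro j hj i hi
      simp only [Finset.mem_insert, Finset.mem_singleton, Finset.notMem_empty,
        ha0, ha1, ha2, hb0, hb1, hb2, hbN, CrownAux.cA_inj, CrownAux.cB_inj, CrownAux.cA_ne_cB,
        CrownAux.cB_ne_cA, Fin.ext_iff, Fin.val_mk, hi0, hi1, hi2, hiN, or_self, or_false, false_or, or_true, true_or,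
        and_false, false_and, and_true, true_and] at hj hi ⊢
      try omega
  have hd2 : CrownAux.IsDownClosed ({b1} : Finset (Crown n)) := by
    refine CrownAux.DC_of _ ?_ ?_
    · intro p hp
      simp only [Finset.mem_insert, Finset.mem_singleton] at hp
      rcases hp with rfl
      · exact Or.inr ⟨_, hb1⟩
    · intro j hj i hi
      simp only [Finset.mem_insert, Finset.mem_singleton, Finset.notMem_empty,
        ha0, ha1, ha2, hb0, hb1, hb2, hbN, CrownAux.cA_inj, CrownAux.cB_inj, CrownAux.cA_ne_cB,
        CrownAux.cB_ne_cA, Fin.ext_iff, Fin.val_mk, hi0, hi1, hi2, hiN, or_self, or_false, false_or, or_true, true_or,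
        and_false, false_and, and_true, true_and] at hj hi ⊢
      try omega
  have hd3 : CrownAux.IsDownClosed ({b2} : Finset (Crown n)) := by
    refine CrownAux.DC_of _ ?_ ?_
    · intro p hp
      simp only [Finset.mem_insert, Finset.mem_singleton] at hp
      rcases hp with rfl
      · exact Or.inr ⟨_, hb2⟩
    · intro j hj i hi
      simp only [Finset.mem_insert, Finset.mem_singleton, Finset.notMem_empty,
        ha0, ha1, ha2, hb0, hb1, hb2, hbN, CrownAux.cA_inj, CrownAux.cB_inj, CrownAux.cA_ne_cB,
        CrownAux.cB_ne_cA, Fin.ext_iff, Fin.val_mk, hi0, hi1, hi2, hiN, or_self, or_false, false_or, or_true, true_or,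
        and_false, false_and, and_true, true_and] at hj hi ⊢
      try omega
  have hd4 : CrownAux.IsDownClosed ({b0, b1} : Finset (Crown n)) := by
    refine CrownAux.DC_of _ ?_ ?_
    · intro p hp
      simp only [Finset.mem_insert, Finset.mem_singleton] at hp
      rcases hp with rfl|rfl
      · exact Or.inr ⟨_, hb0⟩
      · exact Or.inr ⟨_, hb1⟩
    · intro j hj i hi
      simp only [Finset.mem_insert, Finset.mem_singleton, Finset.notMem_empty,
        ha0, ha1, ha2, hb0, hb1, hb2, hbN, CrownAux.cA_inj, CrownAux.cB_inj, CrownAux.cA_ne_cB,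
        CrownAux.cB_ne_cA, Fin.ext_iff, Fin.val_mk, hi0, hi1, hi2, hiN, or_self, or_false, false_or, or_true, true_or,
        and_false, false_and, and_true, true_and] at hj hi ⊢
      try omega
  have hd5 : CrownAux.IsDownClosed ({b0, b2} : Finset (Crown n)) := by
    refine CrownAux.DC_of _ ?_ ?_
    · intro p hp
      simp only [Finset.mem_insert, Finset.mem_singleton] at hp
      rcases hp with rfl|rfl
      · exact Or.inr ⟨_, hb0⟩
      · exact Or.inr ⟨_, hb2⟩
    · intro j hj i hi
      simp only [Finset.mem_insert, Finset.mem_singleton, Finset.notMem_empty,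
        ha0, ha1, ha2, hb0, hb1, hb2, hbN, CrownAux.cA_inj, CrownAux.cB_inj, CrownAux.cA_ne_cB,
        CrownAux.cB_ne_cA, Fin.ext_iff, Fin.val_mk, hi0, hi1, hi2, hiN, or_self, or_false, false_or, or_true, true_or,
        and_false, false_and, and_true, true_and] at hj hi ⊢
      try omega
  have hd6 : CrownAux.IsDownClosed ({b1, b2} : Finset (Crown n)) := by
    refine CrownAux.DC_of _ ?_ ?_
    · intro p hp
      simp only [Finset.mem_insert, Finset.mem_singleton] at hp
      rcases hp with rfl|rfl
      · exact Or.inr ⟨_, hb1⟩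
      · exact Or.inr ⟨_, hb2⟩
    · intro j hj i hi
      simp only [Finset.mem_insert, Finset.mem_singleton, Finset.notMem_empty,
        ha0, ha1, ha2, hb0, hb1, hb2, hbN, CrownAux.cA_inj, CrownAux.cB_inj, CrownAux.cA_ne_cB,
        CrownAux.cB_ne_cA, Fin.ext_iff, Fin.val_mk, hi0, hi1, hi2, hiN, or_self, or_false, false_or, or_true, true_or,
        and_false, false_and, and_true, true_and] at hj hi ⊢
      try omega
  have hd7 : CrownAux.IsDownClosed ({b0, b1, b2} : Finset (Crown n)) := by
    refine CrownAux.DC_of _ ?_ ?_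
    · intro p hp
      simp only [Finset.mem_insert, Finset.mem_singleton] at hp
      rcases hp with rfl|rfl|rfl
      · exact Or.inr ⟨_, hb0⟩
      · exact Or.inr ⟨_, hb1⟩
      · exact Or.inr ⟨_, hb2⟩
    · intro j hj i hi
      simp only [Finset.mem_insert, Finset.mem_singleton, Finset.notMem_empty,
        ha0, ha1, ha2, hb0, hb1, hb2, hbN, CrownAux.cA_inj, CrownAux.cB_inj, CrownAux.cA_ne_cB,
        CrownAux.cB_ne_cA, Fin.ext_iff, Fin.val_mk, hi0, hi1, hi2, hiN, or_self, or_false, false_or, or_true, true_or,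
        and_false, false_and, and_true, true_and] at hj hi ⊢
      try omega
  have hd8 : CrownAux.IsDownClosed ({a1, b0, b1} : Finset (Crown n)) := by
    refine CrownAux.DC_of _ ?_ ?_
    · intro p hp
      simp only [Finset.mem_insert, Finset.mem_singleton] at hp
      rcases hp with rfl|rfl|rfl
      · exact Or.inl ⟨_, ha1⟩
      · exact Or.inr ⟨_, hb0⟩
      · exact Or.inr ⟨_, hb1⟩
    · intro j hj i hi
      simp only [Finset.mem_insert, Finset.mem_singleton, Finset.notMem_empty,
        ha0, ha1, ha2, hb0, hb1, hb2, hbN, CrownAux.cA_inj, CrownAux.cB_inj, CrownAux.cA_ne_cB,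
        CrownAux.cB_ne_cA, Fin.ext_iff, Fin.val_mk, hi0, hi1, hi2, hiN, or_self, or_false, false_or, or_true, true_or,
        and_false, false_and, and_true, true_and] at hj hi ⊢
      try omega
  have hd9 : CrownAux.IsDownClosed ({a1, b0, b1, b2} : Finset (Crown n)) := by
    refine CrownAux.DC_of _ ?_ ?_
    · intro p hp
      simp only [Finset.mem_insert, Finset.mem_singleton] at hp
      rcases hp with rfl|rfl|rfl|rfl
      · exact Or.inl ⟨_, ha1⟩
      · exact Or.inr ⟨_, hb0⟩
      · exact Or.inr ⟨_, hb1⟩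
      · exact Or.inr ⟨_, hb2⟩
    · intro j hj i hi
      simp only [Finset.mem_insert, Finset.mem_singleton, Finset.notMem_empty,
        ha0, ha1, ha2, hb0, hb1, hb2, hbN, CrownAux.cA_inj, CrownAux.cB_inj, CrownAux.cA_ne_cB,
        CrownAux.cB_ne_cA, Fin.ext_iff, Fin.val_mk, hi0, hi1, hi2, hiN, or_self, or_false, false_or, or_true, true_or,
        and_false, false_and, and_true, true_and] at hj hi ⊢
      try omega
  have hd10 : CrownAux.IsDownClosed ({a2, b1, b2} : Finset (Crown n)) := by
    refine CrownAux.DC_of _ ?_ ?_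
    · intro p hp
      simp only [Finset.mem_insert, Finset.mem_singleton] at hp
      rcases hp with rfl|rfl|rfl
      · exact Or.inl ⟨_, ha2⟩
      · exact Or.inr ⟨_, hb1⟩
      · exact Or.inr ⟨_, hb2⟩
    · intro j hj i hi
      simp only [Finset.mem_insert, Finset.mem_singleton, Finset.notMem_empty,
        ha0, ha1, ha2, hb0, hb1, hb2, hbN, CrownAux.cA_inj, CrownAux.cB_inj, CrownAux.cA_ne_cB,
        CrownAux.cB_ne_cA, Fin.ext_iff, Fin.val_mk, hi0, hi1, hi2, hiN, or_self, or_false, false_or, or_true, true_or,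
        and_false, false_and, and_true, true_and] at hj hi ⊢
      try omega
  have hd11 : CrownAux.IsDownClosed ({a2, b0, b1, b2} : Finset (Crown n)) := by
    refine CrownAux.DC_of _ ?_ ?_
    · intro p hp
      simp only [Finset.mem_insert, Finset.mem_singleton] at hp
      rcases hp with rfl|rfl|rfl|rfl
      · exact Or.inl ⟨_, ha2⟩
      · exact Or.inr ⟨_, hb0⟩
      · exact Or.inr ⟨_, hb1⟩
      · exact Or.inr ⟨_, hb2⟩
    · intro j hj i hi
      simp only [Finset.mem_insert, Finset.mem_singleton, Finset.notMem_empty,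
        ha0, ha1, ha2, hb0, hb1, hb2, hbN, CrownAux.cA_inj, CrownAux.cB_inj, CrownAux.cA_ne_cB,
        CrownAux.cB_ne_cA, Fin.ext_iff, Fin.val_mk, hi0, hi1, hi2, hiN, or_self, or_false, false_or, or_true, true_or,
        and_false, false_and, and_true, true_and] at hj hi ⊢
      try omega
  have hd12 : CrownAux.IsDownClosed ({a1, a2, b0, b1, b2} : Finset (Crown n)) := by
    refine CrownAux.DC_of _ ?_ ?_
    · intro p hp
      simp only [Finset.mem_insert, Finset.mem_singleton] at hp
      rcases hp with rfl|rfl|rfl|rfl|rfl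
      · exact Or.inl ⟨_, ha1⟩
      · exact Or.inl ⟨_, ha2⟩
      · exact Or.inr ⟨_, hb0⟩
      · exact Or.inr ⟨_, hb1⟩
      · exact Or.inr ⟨_, hb2⟩
    · intro j hj i hi
      simp only [Finset.mem_insert, Finset.mem_singleton, Finset.notMem_empty,
        ha0, ha1, ha2, hb0, hb1, hb2, hbN, CrownAux.cA_inj, CrownAux.cB_inj, CrownAux.cA_ne_cB,
        CrownAux.cB_ne_cA, Fin.ext_iff, Fin.val_mk, hi0, hi1, hi2, hiN, or_self, or_false, false_or, or_true, true_or,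
        and_false, false_and, and_true, true_and] at hj hi ⊢
      try omega
  have hd13 : CrownAux.IsDownClosed ({a0, bN, b0} : Finset (Crown n)) := by
    refine CrownAux.DC_of _ ?_ ?_
    · intro p hp
      simp only [Finset.mem_insert, Finset.mem_singleton] at hp
      rcases hp with rfl|rfl|rfl
      · exact Or.inl ⟨_, ha0⟩
      · exact Or.inr ⟨_, hbN⟩
      · exact Or.inr ⟨_, hb0⟩
    · intro j hj i hi
      simp only [Finset.mem_insert, Finset.mem_singleton, Finset.notMem_empty,
        ha0, ha1, ha2, hb0, hb1, hb2, hbN, CrownAux.cA_inj, CrownAux.cB_inj, CrownAux.cA_ne_cB,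
        CrownAux.cB_ne_cA, Fin.ext_iff, Fin.val_mk, hi0, hi1, hi2, hiN, or_self, or_false, false_or, or_true, true_or,
        and_false, false_and, and_true, true_and] at hj hi ⊢
      try omega
  have hd14 : CrownAux.IsDownClosed ({a0, bN, b0, b1} : Finset (Crown n)) := by
    refine CrownAux.DC_of _ ?_ ?_
    · intro p hp
      simp only [Finset.mem_insert, Finset.mem_singleton] at hp
      rcases hp with rfl|rfl|rfl|rfl
      · exact Or.inl ⟨_, ha0⟩
      · exact Or.inr ⟨_, hbN⟩
      · exact Or.inr ⟨_, hb0⟩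
      · exact Or.inr ⟨_, hb1⟩
    · intro j hj i hi
      simp only [Finset.mem_insert, Finset.mem_singleton, Finset.notMem_empty,
        ha0, ha1, ha2, hb0, hb1, hb2, hbN, CrownAux.cA_inj, CrownAux.cB_inj, CrownAux.cA_ne_cB,
        CrownAux.cB_ne_cA, Fin.ext_iff, Fin.val_mk, hi0, hi1, hi2, hiN, or_self, or_false, false_or, or_true, true_or,
        and_false, false_and, and_true, true_and] at hj hi ⊢
      try omega
  have hd15 : CrownAux.IsDownClosed ({a0, a1, bN, b0, b1} : Finset (Crown n)) := by
    refine CrownAux.DC_of _ ?_ ?_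
    · intro p hp
      simp only [Finset.mem_insert, Finset.mem_singleton] at hp
      rcases hp with rfl|rfl|rfl|rfl|rfl
      · exact Or.inl ⟨_, ha0⟩
      · exact Or.inl ⟨_, ha1⟩
      · exact Or.inr ⟨_, hbN⟩
      · exact Or.inr ⟨_, hb0⟩
      · exact Or.inr ⟨_, hb1⟩
    · intro j hj i hi
      simp only [Finset.mem_insert, Finset.mem_singleton, Finset.notMem_empty,
        ha0, ha1, ha2, hb0, hb1, hb2, hbN, CrownAux.cA_inj, CrownAux.cB_inj, CrownAux.cA_ne_cB,
        CrownAux.cB_ne_cA, Fin.ext_iff, Fin.val_mk, hi0, hi1, hi2, hiN, or_self, or_false, false_or, or_true, true_or,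
        and_false, false_and, and_true, true_and] at hj hi ⊢
      try omega
  have hd16 : CrownAux.IsDownClosed ({a0, a2, bN, b0, b1, b2} : Finset (Crown n)) := by
    refine CrownAux.DC_of _ ?_ ?_
    · intro p hp
      simp only [Finset.mem_insert, Finset.mem_singleton] at hp
      rcases hp with rfl|rfl|rfl|rfl|rfl|rfl
      · exact Or.inl ⟨_, ha0⟩
      · exact Or.inl ⟨_, ha2⟩
      · exact Or.inr ⟨_, hbN⟩
      · exact Or.inr ⟨_, hb0⟩
      · exact Or.inr ⟨_, hb1⟩
      · exact Or.inr ⟨_, hb2⟩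
    · intro j hj i hi
      simp only [Finset.mem_insert, Finset.mem_singleton, Finset.notMem_empty,
        ha0, ha1, ha2, hb0, hb1, hb2, hbN, CrownAux.cA_inj, CrownAux.cB_inj, CrownAux.cA_ne_cB,
        CrownAux.cB_ne_cA, Fin.ext_iff, Fin.val_mk, hi0, hi1, hi2, hiN, or_self, or_false, false_or, or_true, true_or,
        and_false, false_and, and_true, true_and] at hj hi ⊢
      try omega
  have hd17 : CrownAux.IsDownClosed ({a0, a1, a2, bN, b0, b1, b2} : Finset (Crown n)) := by
    refine CrownAux.DC_of _ ?_ ?_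
    · intro p hp
      simp only [Finset.mem_insert, Finset.mem_singleton] at hp
      rcases hp with rfl|rfl|rfl|rfl|rfl|rfl|rfl
      · exact Or.inl ⟨_, ha0⟩
      · exact Or.inl ⟨_, ha1⟩
      · exact Or.inl ⟨_, ha2⟩
      · exact Or.inr ⟨_, hbN⟩
      · exact Or.inr ⟨_, hb0⟩
      · exact Or.inr ⟨_, hb1⟩
      · exact Or.inr ⟨_, hb2⟩
    · intro j hj i hi
      simp only [Finset.mem_insert, Finset.mem_singleton, Finset.notMem_empty,
        ha0, ha1, ha2, hb0, hb1, hb2, hbN, CrownAux.cA_inj, CrownAux.cB_inj, CrownAux.cA_ne_cB,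
        CrownAux.cB_ne_cA, Fin.ext_iff, Fin.val_mk, hi0, hi1, hi2, hiN, or_self, or_false, false_or, or_true, true_or,
        and_false, false_and, and_true, true_and] at hj hi ⊢
      try omega
  have hDC : ∀ i : Fin 18, CrownAux.IsDownClosed (Ts i) := by
    intro i; subst hTs; fin_cases i
    · exact hd0
    · exact hd1
    · exact hd2
    · exact hd3
    · exact hd4
    · exact hd5
    · exact hd6
    · exact hd7
    · exact hd8
    · exact hd9
    · exact hd10
    · exact hd11
    · exact hd12
    · exact hd13
    · exact hd14
    · exact hd15
    · exact hd16
    · exact hd17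
  obtain ⟨c, hc⟩ : ∃ c : Finset (Crown n) → Bool × Bool × Bool × Bool × Bool × Bool, c =
    fun S => (decide (a0 ∈ S), decide (a1 ∈ S), decide (a2 ∈ S),
      decide (b0 ∈ S), decide (b1 ∈ S), decide (b2 ∈ S ∧ a0 ∉ S)) := ⟨_, rfl⟩
  obtain ⟨V, hV⟩ : ∃ V : Fin 18 → Bool × Bool × Bool × Bool × Bool × Bool, V =
    ![(false, false, false, false, false, false),
      (false, false, false, true, false, false),
      (false, false, false, false, true, false),
      (false, false, false, false, false, true),
      (false, false, false, true, true, false),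
      (false, false, false, true, false, true),
      (false, false, false, false, true, true),
      (false, false, false, true, true, true),
      (false, true, false, true, true, false),
      (false, true, false, true, true, true),
      (false, false, true, false, true, true),
      (false, false, true, true, true, true),
      (false, true, true, true, true, true),
      (true, false, false, true, false, false),
      (true, false, false, true, true, false),
      (true, true, false, true, true, false),
      (true, false, true, true, true, false),
      (true, true, true, true, true, false)] := ⟨_, rfl⟩
  have htr0 : c (∅ : Finset (Crown n)) = (false, false, false, false, false, false) := by
    rw [hc]
    simp only [Finset.mem_insert, Finset.mem_singleton, Finset.notMem_empty,
        ha0, ha1, ha2, hb0, hb1, hb2, hbN, CrownAux.cA_inj, CrownAux.cB_inj, CrownAux.cA_ne_cB,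
        CrownAux.cB_ne_cA, Fin.ext_iff, Fin.val_mk, hi0, hi1, hi2, hiN, Prod.mk.injEq, decide_eq_true_eq, decide_eq_false_iff_not,
      not_and, not_or, not_not, not_false_eq_true, not_true_eq_false]
    repeat' apply And.intro
    all_goals first | trivial | (exact fun h => h) | omega | tauto
  have htr1 : c ({b0} : Finset (Crown n)) = (false, false, false, true, false, false) := by
    rw [hc]
    simp only [Finset.mem_insert, Finset.mem_singleton, Finset.notMem_empty,
        ha0, ha1, ha2, hb0, hb1, hb2, hbN, CrownAux.cA_inj, CrownAux.cB_inj, CrownAux.cA_ne_cB,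
        CrownAux.cB_ne_cA, Fin.ext_iff, Fin.val_mk, hi0, hi1, hi2, hiN, Prod.mk.injEq, decide_eq_true_eq, decide_eq_false_iff_not,
      not_and, not_or, not_not, not_false_eq_true, not_true_eq_false]
    repeat' apply And.intro
    all_goals first | trivial | (exact fun h => h) | omega | tauto
  have htr2 : c ({b1} : Finset (Crown n)) = (false, false, false, false, true, false) := by
    rw [hc]
    simp only [Finset.mem_insert, Finset.mem_singleton, Finset.notMem_empty,
        ha0, ha1, ha2, hb0, hb1, hb2, hbN, CrownAux.cA_inj, CrownAux.cB_inj, CrownAux.cA_ne_cB,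
        CrownAux.cB_ne_cA, Fin.ext_iff, Fin.val_mk, hi0, hi1, hi2, hiN, Prod.mk.injEq, decide_eq_true_eq, decide_eq_false_iff_not,
      not_and, not_or, not_not, not_false_eq_true, not_true_eq_false]
    repeat' apply And.intro
    all_goals first | trivial | (exact fun h => h) | omega | tauto
  have htr3 : c ({b2} : Finset (Crown n)) = (false, false, false, false, false, true) := by
    rw [hc]
    simp only [Finset.mem_insert, Finset.mem_singleton, Finset.notMem_empty,
        ha0, ha1, ha2, hb0, hb1, hb2, hbN, CrownAux.cA_inj, CrownAux.cB_inj, CrownAux.cA_ne_cB,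
        CrownAux.cB_ne_cA, Fin.ext_iff, Fin.val_mk, hi0, hi1, hi2, hiN, Prod.mk.injEq, decide_eq_true_eq, decide_eq_false_iff_not,
      not_and, not_or, not_not, not_false_eq_true, not_true_eq_false]
    repeat' apply And.intro
    all_goals first | trivial | (exact fun h => h) | omega | tauto
  have htr4 : c ({b0, b1} : Finset (Crown n)) = (false, false, false, true, true, false) := by
    rw [hc]
    simp only [Finset.mem_insert, Finset.mem_singleton, Finset.notMem_empty,
        ha0, ha1, ha2, hb0, hb1, hb2, hbN, CrownAux.cA_inj, CrownAux.cB_inj, CrownAux.cA_ne_cB,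
        CrownAux.cB_ne_cA, Fin.ext_iff, Fin.val_mk, hi0, hi1, hi2, hiN, Prod.mk.injEq, decide_eq_true_eq, decide_eq_false_iff_not,
      not_and, not_or, not_not, not_false_eq_true, not_true_eq_false]
    repeat' apply And.intro
    all_goals first | trivial | (exact fun h => h) | omega | tauto
  have htr5 : c ({b0, b2} : Finset (Crown n)) = (false, false, false, true, false, true) := by
    rw [hc]
    simp only [Finset.mem_insert, Finset.mem_singleton, Finset.notMem_empty,
        ha0, ha1, ha2, hb0, hb1, hb2, hbN, CrownAux.cA_inj, CrownAux.cB_inj, CrownAux.cA_ne_cB,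
        CrownAux.cB_ne_cA, Fin.ext_iff, Fin.val_mk, hi0, hi1, hi2, hiN, Prod.mk.injEq, decide_eq_true_eq, decide_eq_false_iff_not,
      not_and, not_or, not_not, not_false_eq_true, not_true_eq_false]
    repeat' apply And.intro
    all_goals first | trivial | (exact fun h => h) | omega | tauto
  have htr6 : c ({b1, b2} : Finset (Crown n)) = (false, false, false, false, true, true) := by
    rw [hc]
    simp only [Finset.mem_insert, Finset.mem_singleton, Finset.notMem_empty,
        ha0, ha1, ha2, hb0, hb1, hb2, hbN, CrownAux.cA_inj, CrownAux.cB_inj, CrownAux.cA_ne_cB,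
        CrownAux.cB_ne_cA, Fin.ext_iff, Fin.val_mk, hi0, hi1, hi2, hiN, Prod.mk.injEq, decide_eq_true_eq, decide_eq_false_iff_not,
      not_and, not_or, not_not, not_false_eq_true, not_true_eq_false]
    repeat' apply And.intro
    all_goals first | trivial | (exact fun h => h) | omega | tauto
  have htr7 : c ({b0, b1, b2} : Finset (Crown n)) = (false, false, false, true, true, true) := by
    rw [hc]
    simp only [Finset.mem_insert, Finset.mem_singleton, Finset.notMem_empty,
        ha0, ha1, ha2, hb0, hb1, hb2, hbN, CrownAux.cA_inj, CrownAux.cB_inj, CrownAux.cA_ne_cB,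
        CrownAux.cB_ne_cA, Fin.ext_iff, Fin.val_mk, hi0, hi1, hi2, hiN, Prod.mk.injEq, decide_eq_true_eq, decide_eq_false_iff_not,
      not_and, not_or, not_not, not_false_eq_true, not_true_eq_false]
    repeat' apply And.intro
    all_goals first | trivial | (exact fun h => h) | omega | tauto
  have htr8 : c ({a1, b0, b1} : Finset (Crown n)) = (false, true, false, true, true, false) := by
    rw [hc]
    simp only [Finset.mem_insert, Finset.mem_singleton, Finset.notMem_empty,
        ha0, ha1, ha2, hb0, hb1, hb2, hbN, CrownAux.cA_inj, CrownAux.cB_inj, CrownAux.cA_ne_cB,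
        CrownAux.cB_ne_cA, Fin.ext_iff, Fin.val_mk, hi0, hi1, hi2, hiN, Prod.mk.injEq, decide_eq_true_eq, decide_eq_false_iff_not,
      not_and, not_or, not_not, not_false_eq_true, not_true_eq_false]
    repeat' apply And.intro
    all_goals first | trivial | (exact fun h => h) | omega | tauto
  have htr9 : c ({a1, b0, b1, b2} : Finset (Crown n)) = (false, true, false, true, true, true) := by
    rw [hc]
    simp only [Finset.mem_insert, Finset.mem_singleton, Finset.notMem_empty,
        ha0, ha1, ha2, hb0, hb1, hb2, hbN, CrownAux.cA_inj, CrownAux.cB_inj, CrownAux.cA_ne_cB,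
        CrownAux.cB_ne_cA, Fin.ext_iff, Fin.val_mk, hi0, hi1, hi2, hiN, Prod.mk.injEq, decide_eq_true_eq, decide_eq_false_iff_not,
      not_and, not_or, not_not, not_false_eq_true, not_true_eq_false]
    repeat' apply And.intro
    all_goals first | trivial | (exact fun h => h) | omega | tauto
  have htr10 : c ({a2, b1, b2} : Finset (Crown n)) = (false, false, true, false, true, true) := by
    rw [hc]
    simp only [Finset.mem_insert, Finset.mem_singleton, Finset.notMem_empty,
        ha0, ha1, ha2, hb0, hb1, hb2, hbN, CrownAux.cA_inj, CrownAux.cB_inj, CrownAux.cA_ne_cB,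
        CrownAux.cB_ne_cA, Fin.ext_iff, Fin.val_mk, hi0, hi1, hi2, hiN, Prod.mk.injEq, decide_eq_true_eq, decide_eq_false_iff_not,
      not_and, not_or, not_not, not_false_eq_true, not_true_eq_false]
    repeat' apply And.intro
    all_goals first | trivial | (exact fun h => h) | omega | tauto
  have htr11 : c ({a2, b0, b1, b2} : Finset (Crown n)) = (false, false, true, true, true, true) := by
    rw [hc]
    simp only [Finset.mem_insert, Finset.mem_singleton, Finset.notMem_empty,
        ha0, ha1, ha2, hb0, hb1, hb2, hbN, CrownAux.cA_inj, CrownAux.cB_inj, CrownAux.cA_ne_cB,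
        CrownAux.cB_ne_cA, Fin.ext_iff, Fin.val_mk, hi0, hi1, hi2, hiN, Prod.mk.injEq, decide_eq_true_eq, decide_eq_false_iff_not,
      not_and, not_or, not_not, not_false_eq_true, not_true_eq_false]
    repeat' apply And.intro
    all_goals first | trivial | (exact fun h => h) | omega | tauto
  have htr12 : c ({a1, a2, b0, b1, b2} : Finset (Crown n)) = (false, true, true, true, true, true) := by
    rw [hc]
    simp only [Finset.mem_insert, Finset.mem_singleton, Finset.notMem_empty,
        ha0, ha1, ha2, hb0, hb1, hb2, hbN, CrownAux.cA_inj, CrownAux.cB_inj, CrownAux.cA_ne_cB,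
        CrownAux.cB_ne_cA, Fin.ext_iff, Fin.val_mk, hi0, hi1, hi2, hiN, Prod.mk.injEq, decide_eq_true_eq, decide_eq_false_iff_not,
      not_and, not_or, not_not, not_false_eq_true, not_true_eq_false]
    repeat' apply And.intro
    all_goals first | trivial | (exact fun h => h) | omega | tauto
  have htr13 : c ({a0, bN, b0} : Finset (Crown n)) = (true, false, false, true, false, false) := by
    rw [hc]
    simp only [Finset.mem_insert, Finset.mem_singleton, Finset.notMem_empty,
        ha0, ha1, ha2, hb0, hb1, hb2, hbN, CrownAux.cA_inj, CrownAux.cB_inj, CrownAux.cA_ne_cB,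
        CrownAux.cB_ne_cA, Fin.ext_iff, Fin.val_mk, hi0, hi1, hi2, hiN, Prod.mk.injEq, decide_eq_true_eq, decide_eq_false_iff_not,
      not_and, not_or, not_not, not_false_eq_true, not_true_eq_false]
    repeat' apply And.intro
    all_goals first | trivial | (exact fun h => h) | omega | tauto
  have htr14 : c ({a0, bN, b0, b1} : Finset (Crown n)) = (true, false, false, true, true, false) := by
    rw [hc]
    simp only [Finset.mem_insert, Finset.mem_singleton, Finset.notMem_empty,
        ha0, ha1, ha2, hb0, hb1, hb2, hbN, CrownAux.cA_inj, CrownAux.cB_inj, CrownAux.cA_ne_cB,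
        CrownAux.cB_ne_cA, Fin.ext_iff, Fin.val_mk, hi0, hi1, hi2, hiN, Prod.mk.injEq, decide_eq_true_eq, decide_eq_false_iff_not,
      not_and, not_or, not_not, not_false_eq_true, not_true_eq_false]
    repeat' apply And.intro
    all_goals first | trivial | (exact fun h => h) | omega | tauto
  have htr15 : c ({a0, a1, bN, b0, b1} : Finset (Crown n)) = (true, true, false, true, true, false) := by
    rw [hc]
    simp only [Finset.mem_insert, Finset.mem_singleton, Finset.notMem_empty,
        ha0, ha1, ha2, hb0, hb1, hb2, hbN, CrownAux.cA_inj, CrownAux.cB_inj, CrownAux.cA_ne_cB,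
        CrownAux.cB_ne_cA, Fin.ext_iff, Fin.val_mk, hi0, hi1, hi2, hiN, Prod.mk.injEq, decide_eq_true_eq, decide_eq_false_iff_not,
      not_and, not_or, not_not, not_false_eq_true, not_true_eq_false]
    repeat' apply And.intro
    all_goals first | trivial | (exact fun h => h) | omega | tauto
  have htr16 : c ({a0, a2, bN, b0, b1, b2} : Finset (Crown n)) = (true, false, true, true, true, false) := by
    rw [hc]
    simp only [Finset.mem_insert, Finset.mem_singleton, Finset.notMem_empty,
        ha0, ha1, ha2, hb0, hb1, hb2, hbN, CrownAux.cA_inj, CrownAux.cB_inj, CrownAux.cA_ne_cB,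
        CrownAux.cB_ne_cA, Fin.ext_iff, Fin.val_mk, hi0, hi1, hi2, hiN, Prod.mk.injEq, decide_eq_true_eq, decide_eq_false_iff_not,
      not_and, not_or, not_not, not_false_eq_true, not_true_eq_false]
    repeat' apply And.intro
    all_goals first | trivial | (exact fun h => h) | omega | tauto
  have htr17 : c ({a0, a1, a2, bN, b0, b1, b2} : Finset (Crown n)) = (true, true, true, true, true, false) := by
    rw [hc]
    simp only [Finset.mem_insert, Finset.mem_singleton, Finset.notMem_empty,
        ha0, ha1, ha2, hb0, hb1, hb2, hbN, CrownAux.cA_inj, CrownAux.cB_inj, CrownAux.cA_ne_cB,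
        CrownAux.cB_ne_cA, Fin.ext_iff, Fin.val_mk, hi0, hi1, hi2, hiN, Prod.mk.injEq, decide_eq_true_eq, decide_eq_false_iff_not,
      not_and, not_or, not_not, not_false_eq_true, not_true_eq_false]
    repeat' apply And.intro
    all_goals first | trivial | (exact fun h => h) | omega | tauto
  have hcV : ∀ i : Fin 18, c (Ts i) = V i := by
    intro i; subst hTs; subst hV; fin_cases i
    · exact htr0
    · exact htr1
    · exact htr2
    · exact htr3
    · exact htr4
    · exact htr5
    · exact htr6
    · exact htr7
    · exact htr8
    · exact htr9
    · exact htr10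
    · exact htr11
    · exact htr12
    · exact htr13
    · exact htr14
    · exact htr15
    · exact htr16
    · exact htr17
  have hVinj : Function.Injective V := by subst hV; decide
  have hinj : Function.Injective fun i : Fin 18 => (Ts i).sup g := by
    intro i j hij
    have hTT : Ts i = Ts j := hsupinj _ _ (hDC i) (hDC j) hij
    exact hVinj (by rw [← hcV, ← hcV, hTT])
  calc 18 = Fintype.card (Fin 18) := (Fintype.card_fin 18).symm
    _ ≤ Fintype.card D := Fintype.card_le_of_injective _ hinj
end
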